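/- arXiv:math/0010070 — 2 statements merged into one kernel-verified Lean document; each statement's English description precedes it below -/
import Mathlib

section
/- The k-creature averaging functions F* are nice; that is, for every k-creature t = (n_t, g_t, P_t): (α) if r_f ≤ r'_f for all f ∈ P_t then F*_t(r) ≤ F*_t(r'); (γ) F*_t(b·r_f : f ∈ P_t) = b·F*_t(r_f : f ∈ P_t) for every b ∈ [0,1]; (δ) for every r ∈ [0,1]^{P_t} and ε > 0 there are reals r'_f > r_f such that every r'' ∈ [0,1]^{P_t} with r_f ≤ r''_f < r'_f for all f satisfies F*_t(r'') < F*_t(r) + ε; and (β) if n_t ≥ 2 and r_f, r⁰_f, r¹_f ∈ [0,1] (f ∈ P_t) satisfy r⁰_f + r¹_f ≥ r_f for all f and F*_t(r_f : f ∈ P_t) ≥ 2^(−2^k), then there are reals c₀, c₁ with c₀ + c₁ = (1 − 2^(−2^k))·F*_t(r_f : f ∈ P_t) and k-creatures s₀, s₁ ∈ Σ*(t) such that whenever ℓ < 2 and c_ℓ > 0: n_{s_ℓ} ≥ n_t − 1, P_{s_ℓ} ⊆ { f ∈ P_t : r^ℓ_f > 0 }, and F*_{s_ℓ}(r^ℓ_f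 : f ∈ P_{s_ℓ}) ≥ c_ℓ. (Here, for X ⊆ P_t and r ∈ [0,1]^X, F*_t(r_f : f ∈ X) denotes F*_t applied to the extension of r by zero outside X.) -/
namespace MeasuredCreatures

/-- The condition on the parameter function `φ = φ_k`:
`φ(0) = 2^(k+4)` and `φ(i+1) > 2^(2^(k+3)) + φ(i) + 2^(2k+7)/log₂(1 + 2^(−2^(2k+7)))`. -/
def PhiCond (k : ℕ) (φ : ℕ → ℕ) : Prop :=
  φ 0 = 2 ^ (k + 4) ∧
  ∀ i : ℕ, (φ (i + 1) : ℝ) >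
    (2 : ℝ) ^ (2 ^ (k + 3)) + (φ i : ℝ) +
      (2 : ℝ) ^ (2 * k + 7) / Real.logb 2 (1 + ((2 : ℝ) ^ (2 ^ (2 * k + 7)))⁻¹)

/-- `N = N_k = 2^(1+⌊log₂ φ(k+1)⌋)`. -/
def Nval (k : ℕ) (φ : ℕ → ℕ) : ℕ := 2 ^ (1 + Nat.log 2 (φ (k + 1)))

/-- The domain of a partial function `g` from `{0,…,N−1}` to `{0,1}`. -/
def pdom {N : ℕ} (g : Fin N → Option Bool) : Finset (Fin N) :=
  Finset.univ.filter fun i => (g i).isSome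

/-- `g ⊆ g'` for partial functions. -/
def PSub {N : ℕ} (g g' : Fin N → Option Bool) : Prop :=
  ∀ (i : Fin N) (b : Bool), g i = some b → g' i = some b

/-- `g ⊆ f` for a partial function `g` and a total function `f`. -/
def PSubF {N : ℕ} (g : Fin N → Option Bool) (f : Fin N → Bool) : Prop :=
  ∀ (i : Fin N) (b : Bool), g i = some b → f i = b

/-- A `k`-creature: a triple `(n, g, P)` with `n ≤ k` (the norm), `g` a partial function
from `{0,…,N−1}` to `{0,1}` with `|dom g| ≤ φ(k−n)`, and `P` a nonempty set of total
functions extending `g`. -/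
structure Creature (k N : ℕ) (φ : ℕ → ℕ) where
  n : ℕ
  g : Fin N → Option Bool
  P : Finset (Fin N → Bool)
  n_le : n ≤ k
  g_card : (pdom g).card ≤ φ (k - n)
  P_ne : P.Nonempty
  P_ext : ∀ f ∈ P, PSubF g f

/-- `s ∈ Σ*(t)`. -/
def SigmaRel {k N : ℕ} {φ : ℕ → ℕ} (s t : Creature k N φ) : Prop :=
  s.n ≤ t.n ∧ PSub t.g s.g ∧ s.P ⊆ t.P

open Classical in
/-- The averaging function
`F*_t(r) = min { 2^(|dom h|−N) · Σ{ r_f : f ∈ P_t, h ⊆ f } : g_t ⊆ h, |dom h ∖ dom g_t| ≤ 2^(k+3) }`. -/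
noncomputable def Fstar {k N : ℕ} {φ : ℕ → ℕ} (t : Creature k N φ)
    (r : (Fin N → Bool) → ℝ) : ℝ :=
  sInf {v : ℝ | ∃ h : Fin N → Option Bool,
    PSub t.g h ∧ (pdom h \ pdom t.g).card ≤ 2 ^ (k + 3) ∧
    v = (2 : ℝ) ^ (((pdom h).card : ℤ) - (N : ℤ)) *
      ∑ f ∈ t.P, (if PSubF h f then r f else 0)}

section Aux

variable {N : ℕ}

open Classical in
/-- Unnormalized-normalized average value of `x` over extensions of `h` inside `P`. -/
noncomputable def Ev (P : Finset (Fin N → Bool)) (x : (Fin N → Bool) → ℝ)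
    (h : Fin N → Option Bool) : ℝ :=
  (2 : ℝ) ^ (((pdom h).card : ℤ) - (N : ℤ)) * ∑ f ∈ P, (if PSubF h f then x f else 0)

open Classical in
noncomputable def Gm (k : ℕ) (P : Finset (Fin N → Bool)) (x : (Fin N → Bool) → ℝ)
    (g : Fin N → Option Bool) : ℝ :=
  sInf {v : ℝ | ∃ h : Fin N → Option Bool,
    PSub g h ∧ (pdom h \ pdom g).card ≤ 2 ^ (k + 3) ∧ v = Ev P x h}

lemma Fstar_eq_Gm {k N : ℕ} {φ : ℕ → ℕ} (t : Creature k N φ) (x : (Fin N → Bool) → ℝ) :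
    Fstar t x = Gm k t.P x t.g := rfl

lemma PSub.refl (g : Fin N → Option Bool) : PSub g g := fun _ _ hb => hb

lemma PSub.trans {g h h' : Fin N → Option Bool} (h1 : PSub g h) (h2 : PSub h h') :
    PSub g h' := fun i b hb => h2 i b (h1 i b hb)

lemma PSub.subF {g h : Fin N → Option Bool} {f : Fin N → Bool} (h1 : PSub g h)
    (h2 : PSubF h f) : PSubF g f := fun i b hb => h2 i b (h1 i b hb)

lemma mem_pdom {g : Fin N → Option Bool} {i : Fin N} : i ∈ pdom g ↔ (g i).isSome := by
  simp [pdom]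

lemma pdom_mono {g h : Fin N → Option Bool} (hgh : PSub g h) : pdom g ⊆ pdom h := by
  intro i hi
  rw [mem_pdom] at hi ⊢
  obtain ⟨b, hb⟩ := Option.isSome_iff_exists.1 hi
  rw [hgh i b hb]; rfl

lemma GmSet_eq (k : ℕ) (P : Finset (Fin N → Bool)) (x : (Fin N → Bool) → ℝ)
    (g : Fin N → Option Bool) :
    {v : ℝ | ∃ h : Fin N → Option Bool,
      PSub g h ∧ (pdom h \ pdom g).card ≤ 2 ^ (k + 3) ∧ v = Ev P x h} =
    (fun h => Ev P x h) ''
      {h : Fin N → Option Bool | PSub g h ∧ (pdom h \ pdom g).card ≤ 2 ^ (k + 3)} := by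
  ext v
  constructor
  · rintro ⟨h, h1, h2, rfl⟩; exact ⟨h, ⟨h1, h2⟩, rfl⟩
  · rintro ⟨h, ⟨h1, h2⟩, rfl⟩; exact ⟨h, h1, h2, rfl⟩

lemma GmSet_finite (k : ℕ) (P : Finset (Fin N → Bool)) (x : (Fin N → Bool) → ℝ)
    (g : Fin N → Option Bool) :
    {v : ℝ | ∃ h : Fin N → Option Bool,
      PSub g h ∧ (pdom h \ pdom g).card ≤ 2 ^ (k + 3) ∧ v = Ev P x h}.Finite := by
  rw [GmSet_eq]
  exact Set.Finite.image _ (Set.toFinite _)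

lemma GmSet_nonempty (k : ℕ) (P : Finset (Fin N → Bool)) (x : (Fin N → Bool) → ℝ)
    (g : Fin N → Option Bool) :
    {v : ℝ | ∃ h : Fin N → Option Bool,
      PSub g h ∧ (pdom h \ pdom g).card ≤ 2 ^ (k + 3) ∧ v = Ev P x h}.Nonempty :=
  ⟨Ev P x g, g, PSub.refl g, by simp, rfl⟩

lemma Gm_le {k : ℕ} {P : Finset (Fin N → Bool)} {x : (Fin N → Bool) → ℝ}
    {g h : Fin N → Option Bool} (h1 : PSub g h) (h2 : (pdom h \ pdom g).card ≤ 2 ^ (k + 3)) :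
    Gm k P x g ≤ Ev P x h :=
  csInf_le (GmSet_finite k P x g).bddBelow ⟨h, h1, h2, rfl⟩

lemma exists_Gm_eq (k : ℕ) (P : Finset (Fin N → Bool)) (x : (Fin N → Bool) → ℝ)
    (g : Fin N → Option Bool) :
    ∃ h : Fin N → Option Bool, PSub g h ∧ (pdom h \ pdom g).card ≤ 2 ^ (k + 3) ∧
      Gm k P x g = Ev P x h :=
  Set.Nonempty.csInf_mem (GmSet_nonempty k P x g) (GmSet_finite k P x g)

lemma le_Gm {k : ℕ} {P : Finset (Fin N → Bool)} {x : (Fin N → Bool) → ℝ}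
    {g : Fin N → Option Bool} {c : ℝ}
    (H : ∀ h : Fin N → Option Bool, PSub g h → (pdom h \ pdom g).card ≤ 2 ^ (k + 3) →
      c ≤ Ev P x h) :
    c ≤ Gm k P x g := by
  apply le_csInf (GmSet_nonempty k P x g)
  rintro v ⟨h, h1, h2, rfl⟩
  exact H h h1 h2

end Aux
section Aux2
open Classical
variable {N : ℕ} {P : Finset (Fin N → Bool)} {x y : (Fin N → Bool) → ℝ}
  {h : Fin N → Option Bool}

lemma two_zpow_pos (z : ℤ) : (0:ℝ) < 2 ^ z := zpow_pos two_pos z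

lemma Ev_nonneg (hx : ∀ f ∈ P, 0 ≤ x f) : 0 ≤ Ev P x h := by
  apply mul_nonneg (le_of_lt (two_zpow_pos _))
  apply Finset.sum_nonneg
  intro f hf
  by_cases hc : PSubF h f <;> simp [hc, hx f hf]

lemma Ev_mono (hxy : ∀ f ∈ P, x f ≤ y f) : Ev P x h ≤ Ev P y h := by
  apply mul_le_mul_of_nonneg_left _ (le_of_lt (two_zpow_pos _))
  apply Finset.sum_le_sum
  intro f hf
  by_cases hc : PSubF h f <;> simp [hc, hxy f hf]

lemma Ev_subadd {x0 x1 : (Fin N → Bool) → ℝ} (hxy : ∀ f ∈ P, x f ≤ x0 f + x1 f) :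
    Ev P x h ≤ Ev P x0 h + Ev P x1 h := by
  rw [Ev, Ev, Ev, ← mul_add, ← Finset.sum_add_distrib]
  apply mul_le_mul_of_nonneg_left _ (le_of_lt (two_zpow_pos _))
  apply Finset.sum_le_sum
  intro f hf
  by_cases hc : PSubF h f <;> simp [hc, hxy f hf]

lemma Ev_smul (b : ℝ) : Ev P (fun f => b * x f) h = b * Ev P x h := by
  rw [Ev, Ev]
  have : (∑ f ∈ P, if PSubF h f then b * x f else 0)
      = b * ∑ f ∈ P, (if PSubF h f then x f else 0) := by
    rw [Finset.mul_sum]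
    apply Finset.sum_congr rfl
    intro f _
    by_cases hc : PSubF h f <;> simp [hc]
  rw [this]; ring

/-- The extensions of `h` to total functions number at most `2^(N - |pdom h|)`. -/
lemma card_ext_le :
    ((Finset.univ : Finset (Fin N → Bool)).filter fun f => PSubF h f).card ≤
      2 ^ (N - (pdom h).card) := by
  classical
  have hinj : Set.InjOn (fun (f : Fin N → Bool) (i : ((Finset.univ : Finset (Fin N)) \ pdom h : Finset (Fin N))) => f i.1)
      ↑((Finset.univ : Finset (Fin N → Bool)).filter fun f => PSubF h f) := by
    intro f1 hf1 f2 hf2 heq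
    simp only [Finset.coe_filter, Set.mem_setOf_eq, Finset.mem_univ, true_and] at hf1 hf2
    funext i
    by_cases hi : i ∈ pdom h
    · obtain ⟨b, hb⟩ := Option.isSome_iff_exists.1 (mem_pdom.1 hi)
      rw [hf1 i b hb, hf2 i b hb]
    · have : i ∈ (Finset.univ : Finset (Fin N)) \ pdom h := by
        simp [Finset.mem_sdiff, hi]
      exact congrFun heq ⟨i, this⟩
  calc ((Finset.univ : Finset (Fin N → Bool)).filter fun f => PSubF h f).card
      ≤ Fintype.card (((Finset.univ : Finset (Fin N)) \ pdom h : Finset (Fin N)) → Bool) := by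
        apply Finset.card_le_card_of_injOn _ (fun f _ => Finset.mem_univ _) hinj
    _ = 2 ^ (N - (pdom h).card) := by
        rw [Fintype.card_fun, Fintype.card_coe, Finset.card_sdiff_of_subset (Finset.subset_univ _)]
        simp

lemma Ev_le_one (hx : ∀ f ∈ P, x f ≤ 1) (hx0 : ∀ f ∈ P, 0 ≤ x f) : Ev P x h ≤ 1 := by
  have hcard : (pdom h).card ≤ N := by
    simpa using Finset.card_le_card (Finset.subset_univ (pdom h))
  have h1 : (∑ f ∈ P, if PSubF h f then x f else 0) ≤ (2:ℝ) ^ (N - (pdom h).card) := by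
    calc (∑ f ∈ P, if PSubF h f then x f else 0)
        ≤ ∑ f ∈ P, (if PSubF h f then (1:ℝ) else 0) := by
          apply Finset.sum_le_sum
          intro f hf
          by_cases hc : PSubF h f <;> simp [hc, hx f hf, hx0 f hf]
      _ ≤ ∑ f ∈ (Finset.univ : Finset (Fin N → Bool)), (if PSubF h f then (1:ℝ) else 0) := by
          apply Finset.sum_le_sum_of_subset_of_nonneg (Finset.subset_univ _)
          intro f _ _
          by_cases hc : PSubF h f <;> simp [hc]
      _ = ((Finset.univ : Finset (Fin N → Bool)).filter fun f => PSubF h f).card := by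
          rw [Finset.sum_ite, Finset.sum_const, Finset.sum_const]; simp
      _ ≤ (2:ℝ) ^ (N - (pdom h).card) := by
          exact_mod_cast Nat.cast_le.2 card_ext_le
  calc Ev P x h ≤ (2 : ℝ) ^ (((pdom h).card : ℤ) - (N : ℤ)) * (2:ℝ) ^ (N - (pdom h).card) := by
        apply mul_le_mul_of_nonneg_left h1 (le_of_lt (two_zpow_pos _))
    _ = 1 := by
        rw [← zpow_natCast (2:ℝ) (N - (pdom h).card), ← zpow_add₀ (two_ne_zero)]
        rw [show (((pdom h).card : ℤ) - (N : ℤ)) + ((N - (pdom h).card : ℕ) : ℤ) = 0 by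
          push_cast [Nat.cast_sub hcard]; ring]
        rfl

/-- Restriction to a sub-family on which everything relevant is supported. -/
lemma Ev_filter (q : (Fin N → Bool) → Prop) [DecidablePred q] (hq : ∀ f ∈ P, PSubF h f → ¬ q f → x f = 0) :
    Ev (P.filter q) x h = Ev P x h := by
  rw [Ev, Ev]
  congr 1
  apply Finset.sum_subset (Finset.filter_subset _ _)
  intro f hf hnf
  have : ¬ q f := fun hqf => hnf (Finset.mem_filter.2 ⟨hf, hqf⟩)
  by_cases hc : PSubF h f
  · simp [hc, hq f hf hc this]
  · simp [hc]

end Aux2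
section Aux3
open Classical
variable {N : ℕ} {P : Finset (Fin N → Bool)} {x : (Fin N → Bool) → ℝ}

/-- The "pieces": all ways to extend `h` to a partial function with domain `pdom h'`. -/
noncomputable def Pieces (h h' : Fin N → Option Bool) : Finset (Fin N → Option Bool) :=
  Finset.univ.filter fun h'' => pdom h'' = pdom h' ∧ PSub h h''

lemma self_mem_Pieces {h h' : Fin N → Option Bool} (hh : PSub h h') : h' ∈ Pieces h h' := by
  simp [Pieces, hh]

lemma pieces_eq_of_eq_on_dom {h h' h1 h2 : Fin N → Option Bool}
    (m1 : h1 ∈ Pieces h h') (m2 : h2 ∈ Pieces h h')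
    (heq : ∀ i ∈ pdom h', h1 i = h2 i) : h1 = h2 := by
  simp only [Pieces, Finset.mem_filter, Finset.mem_univ, true_and] at m1 m2
  funext i
  by_cases hi : i ∈ pdom h'
  · exact heq i hi
  · have e1 : h1 i = none := by
      have := hi; rw [← m1.1, mem_pdom] at this
      exact Option.not_isSome_iff_eq_none.1 this
    have e2 : h2 i = none := by
      have := hi; rw [← m2.1, mem_pdom] at this
      exact Option.not_isSome_iff_eq_none.1 this
    rw [e1, e2]

lemma card_Pieces_le (h h' : Fin N → Option Bool) (hh : PSub h h') :
    (Pieces h h').card ≤ 2 ^ (pdom h' \ pdom h).card := by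
  have hinj : Set.InjOn
      (fun (h'' : Fin N → Option Bool) (i : (pdom h' \ pdom h : Finset (Fin N))) =>
        (h'' i.1).getD false) ↑(Pieces h h') := by
    intro h1 hm1 h2 hm2 heq
    apply pieces_eq_of_eq_on_dom (Finset.mem_coe.1 hm1) (Finset.mem_coe.1 hm2)
    intro i hi
    simp only [Pieces, Finset.coe_filter, Set.mem_setOf_eq, Finset.mem_univ, true_and] at hm1 hm2
    by_cases hih : i ∈ pdom h
    · obtain ⟨b, hb⟩ := Option.isSome_iff_exists.1 (mem_pdom.1 hih)
      rw [hm1.2 i b hb, hm2.2 i b hb]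
    · have hmem : i ∈ pdom h' \ pdom h := Finset.mem_sdiff.2 ⟨hi, hih⟩
      have h1s : (h1 i).isSome := by rw [← mem_pdom, hm1.1]; exact hi
      have h2s : (h2 i).isSome := by rw [← mem_pdom, hm2.1]; exact hi
      obtain ⟨b1, hb1⟩ := Option.isSome_iff_exists.1 h1s
      obtain ⟨b2, hb2⟩ := Option.isSome_iff_exists.1 h2s
      have := congrFun heq ⟨i, hmem⟩
      simp only [hb1, hb2, Option.getD_some] at this
      rw [hb1, hb2, this]
  calc (Pieces h h').card
      ≤ Fintype.card ((pdom h' \ pdom h : Finset (Fin N)) → Bool) :=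
        Finset.card_le_card_of_injOn _ (fun f _ => Finset.mem_univ _) hinj
    _ = 2 ^ (pdom h' \ pdom h).card := by rw [Fintype.card_fun, Fintype.card_coe]; simp

/-- Partition identity: summing the (unnormalized) sums over all pieces gives the sum over `h`. -/
lemma sum_Pieces (h h' : Fin N → Option Bool) (hh : PSub h h') :
    ∑ h'' ∈ Pieces h h', (∑ f ∈ P, if PSubF h'' f then x f else 0)
      = ∑ f ∈ P, if PSubF h f then x f else 0 := by
  rw [Finset.sum_comm]
  apply Finset.sum_congr rfl
  intro f _
  by_cases hc : PSubF h f
  · rw [if_pos hc]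
    set h0 : Fin N → Option Bool := fun i => if i ∈ pdom h' then some (f i) else none with hh0
    have h0dom : pdom h0 = pdom h' := by
      ext i
      rw [mem_pdom, hh0]
      by_cases hi : i ∈ pdom h' <;> simp [hi]
    have h0mem : h0 ∈ Pieces h h' := by
      simp only [Pieces, Finset.mem_filter, Finset.mem_univ, true_and]
      refine ⟨h0dom, fun i b hb => ?_⟩
      have hi' : i ∈ pdom h' := pdom_mono hh (mem_pdom.2 (by rw [hb]; rfl))
      rw [hh0]
      simp only [hi', if_pos]
      rw [hc i b hb]
    have h0sub : PSubF h0 f := by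
      intro i b hb
      rw [hh0] at hb
      by_cases hi : i ∈ pdom h' <;> simp [hi] at hb
      exact hb
    rw [Finset.sum_eq_single_of_mem h0 h0mem]
    · rw [if_pos h0sub]
    · intro h2 hm2 hne
      rw [if_neg]
      intro h2sub
      apply hne
      apply pieces_eq_of_eq_on_dom hm2 h0mem
      intro i hi
      have h2s : (h2 i).isSome := by
        rw [← mem_pdom]
        simp only [Pieces, Finset.mem_filter, Finset.mem_univ, true_and] at hm2
        rw [hm2.1]; exact hi
      obtain ⟨b, hb⟩ := Option.isSome_iff_exists.1 h2s
      rw [hb, hh0]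
      simp only [hi, if_pos]
      rw [h2sub i b hb]
  · rw [if_neg hc]
    apply Finset.sum_eq_zero
    intro h2 hm2
    rw [if_neg]
    intro h2sub
    simp only [Pieces, Finset.mem_filter, Finset.mem_univ, true_and] at hm2
    exact hc (hm2.2.subF h2sub)

end Aux3
section Aux4
open Classical
variable {N : ℕ} {P : Finset (Fin N → Bool)} {x : (Fin N → Bool) → ℝ}

lemma W_eq (h'' : Fin N → Option Bool) :
    (∑ f ∈ P, if PSubF h'' f then x f else 0)
      = Ev P x h'' * (2:ℝ) ^ ((N : ℤ) - ((pdom h'').card : ℤ)) := by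
  rw [Ev, mul_comm ((2:ℝ) ^ (((pdom h'').card : ℤ) - (N : ℤ))) _, mul_assoc,
    ← zpow_add₀ (two_ne_zero : (2:ℝ) ≠ 0)]
  rw [show (((pdom h'').card : ℤ) - (N : ℤ)) + ((N : ℤ) - ((pdom h'').card : ℤ)) = 0 by ring]
  simp

/-- The key averaging/selection step: if the value at `h` is `v > c ≥ 0` and some
`m`-extension `h'` has value `< c`, then some piece with the same domain as `h'`
has value at least `c + (v - c) * (1 + 2⁻ᵐ)`. -/
lemma step_lemma {h h' : Fin N → Option Bool} {m : ℕ} (hh : PSub h h')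
    (hd : (pdom h' \ pdom h).card ≤ m)
    {c : ℝ} (hc : 0 ≤ c) (hcv : c < Ev P x h) (hbad : Ev P x h' < c) :
    ∃ h'' : Fin N → Option Bool, PSub h h'' ∧ pdom h'' = pdom h' ∧
      c + (Ev P x h - c) * (1 + ((2:ℝ) ^ m)⁻¹) ≤ Ev P x h'' := by
  set v := Ev P x h with hv
  set q : ℝ := ((2:ℝ) ^ m)⁻¹ with hq
  set V : ℝ := c + (v - c) * (1 + q) with hV
  by_contra hcon
  push_neg at hcon
  have hVpos : 0 < V := by
    have hq0 : (0:ℝ) ≤ q := by positivity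
    nlinarith [sub_pos.2 hcv]
  -- all pieces have value < V or are h'
  set d : ℕ := (pdom h' \ pdom h).card with hdd
  set p' : ℕ := (pdom h').card with hp'
  have hps : pdom h ⊆ pdom h' := pdom_mono hh
  have hp'eq : p' = (pdom h).card + d := by
    have h1 : (pdom h' \ pdom h).card = (pdom h').card - (pdom h).card :=
      Finset.card_sdiff_of_subset hps
    have h2 := Finset.card_le_card hps
    omega
  set w : ℝ := (2:ℝ) ^ ((N : ℤ) - (p' : ℤ)) with hw
  have hwpos : 0 < w := two_zpow_pos _
  have hmem : h' ∈ Pieces h h' := self_mem_Pieces hh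
  have hWpiece : ∀ h'' ∈ Pieces h h',
      (∑ f ∈ P, if PSubF h'' f then x f else 0) = Ev P x h'' * w := by
    intro h'' hm
    simp only [Pieces, Finset.mem_filter, Finset.mem_univ, true_and] at hm
    rw [W_eq, hm.1, hw, hp']
  have hsum := sum_Pieces (P := P) (x := x) h h' hh
  -- split off h'
  have hsplit : ∑ h'' ∈ (Pieces h h').erase h', (∑ f ∈ P, if PSubF h'' f then x f else 0)
      + (∑ f ∈ P, if PSubF h' f then x f else 0) = ∑ f ∈ P, if PSubF h f then x f else 0 := by
    rw [Finset.sum_erase_add _ _ hmem, hsum]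
  -- each erased piece has value < V
  have hbound : ∀ h'' ∈ (Pieces h h').erase h',
      (∑ f ∈ P, if PSubF h'' f then x f else 0) ≤ V * w := by
    intro h'' hm
    have hm' := Finset.mem_of_mem_erase hm
    rw [hWpiece h'' hm']
    apply mul_le_mul_of_nonneg_right _ (le_of_lt hwpos)
    simp only [Pieces, Finset.mem_filter, Finset.mem_univ, true_and] at hm'
    exact le_of_lt (hcon h'' hm'.2 hm'.1)
  have hcard : (((Pieces h h').erase h').card : ℝ) ≤ (2:ℝ) ^ d - 1 := by
    have h1 : ((Pieces h h').erase h').card = (Pieces h h').card - 1 :=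
      Finset.card_erase_of_mem hmem
    have h2 : (Pieces h h').card ≤ 2 ^ d := card_Pieces_le h h' hh
    have h3 : 1 ≤ (Pieces h h').card := Finset.card_pos.2 ⟨h', hmem⟩
    have : ((Pieces h h').erase h').card ≤ 2 ^ d - 1 := by omega
    calc (((Pieces h h').erase h').card : ℝ) ≤ ((2 ^ d - 1 : ℕ) : ℝ) := by exact_mod_cast this
      _ = (2:ℝ) ^ d - 1 := by
          push_cast [Nat.cast_sub (Nat.one_le_two_pow)]
          simp
  have hsum_le : ∑ h'' ∈ (Pieces h h').erase h', (∑ f ∈ P, if PSubF h'' f then x f else 0)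
      ≤ ((2:ℝ) ^ d - 1) * (V * w) := by
    calc ∑ h'' ∈ (Pieces h h').erase h', (∑ f ∈ P, if PSubF h'' f then x f else 0)
        ≤ (((Pieces h h').erase h').card : ℝ) * (V * w) := by
          have := Finset.sum_le_card_nsmul ((Pieces h h').erase h')
            (fun h'' => ∑ f ∈ P, if PSubF h'' f then x f else 0) (V * w) hbound
          simpa [nsmul_eq_mul] using this
      _ ≤ ((2:ℝ) ^ d - 1) * (V * w) := by
          apply mul_le_mul_of_nonneg_right hcard (by positivity)
  -- compute W h and W h'
  have hWh : (∑ f ∈ P, if PSubF h f then x f else 0) = v * ((2:ℝ) ^ d * w) := by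
    rw [W_eq, ← hv, hw]
    congr 1
    rw [← zpow_natCast (2:ℝ) d, ← zpow_add₀ (two_ne_zero : (2:ℝ) ≠ 0)]
    congr 1
    rw [hp'eq]
    push_cast
    ring
  have hWh' : (∑ f ∈ P, if PSubF h' f then x f else 0) < c * w := by
    rw [hWpiece h' hmem]
    exact mul_lt_mul_of_pos_right hbad hwpos
  -- the contradiction
  have hfinal : v * ((2:ℝ) ^ d * w) < ((2:ℝ) ^ d - 1) * (V * w) + c * w := by
    rw [← hWh]
    rw [← hsplit]
    exact add_lt_add_of_le_of_lt hsum_le hWh'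
  have hdm : (2:ℝ) ^ d ≤ (2:ℝ) ^ m := by
    apply pow_le_pow_right₀ one_le_two hd
  have hqm : ((2:ℝ) ^ m) * q = 1 := by
    rw [hq]; field_simp
  have hq0 : (0:ℝ) ≤ q := by positivity
  have h1 : (2:ℝ) ^ d * q ≤ 1 := by
    calc (2:ℝ) ^ d * q ≤ (2:ℝ) ^ m * q := mul_le_mul_of_nonneg_right hdm hq0
      _ = 1 := hqm
  have key : ((2:ℝ) ^ d - 1) * V + c ≤ (2:ℝ) ^ d * v := by
    rw [hV]
    nlinarith [mul_nonneg (sub_pos.2 hcv).le hq0,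
      mul_le_mul_of_nonneg_left h1 (sub_pos.2 hcv).le]
  nlinarith [hfinal, mul_le_mul_of_nonneg_right key hwpos.le]

end Aux4
section Aux5
open Classical
variable {N : ℕ} {P : Finset (Fin N → Bool)} {x : (Fin N → Bool) → ℝ}

lemma sdiff_chain {g h h' : Fin N → Option Bool} :
    pdom h' \ pdom g ⊆ (pdom h' \ pdom h) ∪ (pdom h \ pdom g) := by
  intro i hi
  rw [Finset.mem_sdiff] at hi
  by_cases hih : i ∈ pdom h
  · exact Finset.mem_union_right _ (Finset.mem_sdiff.2 ⟨hih, hi.2⟩)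
  · exact Finset.mem_union_left _ (Finset.mem_sdiff.2 ⟨hi.1, hih⟩)

lemma growth (k : ℕ) (P : Finset (Fin N → Bool)) (x : (Fin N → Bool) → ℝ)
    (g : Fin N → Option Bool) (c1 γ : ℝ) (hc1 : 0 < c1) (hγ : 0 < γ)
    (M B : ℕ) (hB : 2 ^ (k + 3) * (M + 1) ≤ B)
    (Hcontra : ∀ h : Fin N → Option Bool, PSub g h → (pdom h \ pdom g).card ≤ B →
      Gm k P x h < c1)
    (h0 : Fin N → Option Bool) (hsub0 : PSub g h0)
    (hdepth0 : (pdom h0 \ pdom g).card ≤ 2 ^ (k + 3))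
    (hstart : c1 + γ ≤ Ev P x h0) :
    ∃ h : Fin N → Option Bool, PSub g h ∧
      c1 + γ * (1 + ((2:ℝ) ^ (2 ^ (k + 3)))⁻¹) ^ M ≤ Ev P x h := by
  set m : ℕ := 2 ^ (k + 3) with hm
  set q : ℝ := ((2:ℝ) ^ m)⁻¹ with hq
  have hq0 : (0:ℝ) ≤ q := by positivity
  have key : ∀ j : ℕ, j ≤ M → ∃ h : Fin N → Option Bool, PSub g h ∧
      (pdom h \ pdom g).card ≤ m * (j + 1) ∧ c1 + γ * (1 + q) ^ j ≤ Ev P x h := by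
    intro j
    induction j with
    | zero =>
      intro _
      exact ⟨h0, hsub0, by simpa using hdepth0, by simpa using hstart⟩
    | succ j ih =>
      intro hjM
      obtain ⟨h, hsub, hdepth, hval⟩ := ih (Nat.le_of_succ_le hjM)
      have hpow : (0:ℝ) < γ * (1 + q) ^ j := by positivity
      have hBh : (pdom h \ pdom g).card ≤ B := by
        calc (pdom h \ pdom g).card ≤ m * (j + 1) := hdepth
          _ ≤ m * (M + 1) := Nat.mul_le_mul_left m (by omega)
          _ ≤ B := hB
      have hGm := Hcontra h hsub hBh
      obtain ⟨h', hsub', hd', hEv'⟩ := exists_Gm_eq k P x h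
      rw [hEv'] at hGm
      obtain ⟨h'', hsub'', hdom'', hval''⟩ :=
        step_lemma hsub' hd' hc1.le (by linarith) hGm
      refine ⟨h'', hsub.trans hsub'', ?_, ?_⟩
      · calc (pdom h'' \ pdom g).card
            ≤ ((pdom h'' \ pdom h) ∪ (pdom h \ pdom g)).card :=
              Finset.card_le_card sdiff_chain
          _ ≤ (pdom h'' \ pdom h).card + (pdom h \ pdom g).card :=
              Finset.card_union_le _ _
          _ ≤ m + m * (j + 1) := by
              apply Nat.add_le_add _ hdepth
              rw [hdom'']; exact hd'
          _ = m * (j + 1 + 1) := by ring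
      · calc c1 + γ * (1 + q) ^ (j + 1)
            = c1 + (γ * (1 + q) ^ j) * (1 + q) := by ring
          _ ≤ c1 + (Ev P x h - c1) * (1 + q) := by
              have : γ * (1 + q) ^ j ≤ Ev P x h - c1 := by linarith
              have h1q : (0:ℝ) ≤ 1 + q := by linarith
              nlinarith
          _ ≤ Ev P x h'' := hval''
  obtain ⟨h, hsub, _, hval⟩ := key M le_rfl
  exact ⟨h, hsub, hval⟩

end Aux5
section Aux6

lemma budget_nat_bound (k : ℕ) :
    2 ^ (k + 3) * (2 ^ 2 ^ (k + 1) * 2 ^ 2 ^ (k + 3) + 2) ≤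
      2 ^ (2 * k + 6 + 2 ^ (2 * k + 7)) := by
  have hMe : 2 ^ 2 ^ (k + 1) * 2 ^ 2 ^ (k + 3) = 2 ^ (2 ^ (k + 1) + 2 ^ (k + 3)) :=
    (pow_add 2 _ _).symm
  have h1e : 1 ≤ 2 ^ (k + 1) + 2 ^ (k + 3) :=
    le_trans Nat.one_le_two_pow (Nat.le_add_right _ _)
  have h2M : 2 ≤ 2 ^ (2 ^ (k + 1) + 2 ^ (k + 3)) := by
    calc 2 = 2 ^ 1 := rfl
      _ ≤ 2 ^ (2 ^ (k + 1) + 2 ^ (k + 3)) := Nat.pow_le_pow_right (by norm_num) h1e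
  have step1 : 2 ^ (k + 3) * (2 ^ 2 ^ (k + 1) * 2 ^ 2 ^ (k + 3) + 2) ≤
      2 ^ (k + 4 + (2 ^ (k + 1) + 2 ^ (k + 3))) := by
    rw [hMe]
    calc 2 ^ (k + 3) * (2 ^ (2 ^ (k + 1) + 2 ^ (k + 3)) + 2)
        ≤ 2 ^ (k + 3) * (2 ^ (2 ^ (k + 1) + 2 ^ (k + 3)) + 2 ^ (2 ^ (k + 1) + 2 ^ (k + 3))) := by
          exact Nat.mul_le_mul_left _ (by omega)
      _ = 2 ^ (k + 4 + (2 ^ (k + 1) + 2 ^ (k + 3))) := by ring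
  have a1 : 2 ^ (k + 1) ≤ 2 ^ (2 * k + 6) := Nat.pow_le_pow_right (by norm_num) (by omega)
  have a2 : 2 ^ (k + 3) ≤ 2 ^ (2 * k + 6) := Nat.pow_le_pow_right (by norm_num) (by omega)
  have a3 : 2 ^ (2 * k + 6) + 2 ^ (2 * k + 6) = 2 ^ (2 * k + 7) := by ring
  have step2 : 2 ^ (k + 4 + (2 ^ (k + 1) + 2 ^ (k + 3))) ≤ 2 ^ (2 * k + 6 + 2 ^ (2 * k + 7)) :=
    Nat.pow_le_pow_right (by norm_num) (by omega)
  omega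

lemma logb_small (k : ℕ) :
    0 < Real.logb 2 (1 + ((2:ℝ) ^ 2 ^ (2 * k + 7))⁻¹) ∧
    Real.logb 2 (1 + ((2:ℝ) ^ 2 ^ (2 * k + 7))⁻¹) ≤ 2 * ((2:ℝ) ^ 2 ^ (2 * k + 7))⁻¹ := by
  set δ : ℝ := ((2:ℝ) ^ 2 ^ (2 * k + 7))⁻¹ with hδ
  have hδ0 : 0 < δ := by positivity
  constructor
  · exact Real.logb_pos one_lt_two (by linarith)
  · have hlog : Real.log (1 + δ) ≤ δ := by
      have := Real.log_le_sub_one_of_pos (show (0:ℝ) < 1 + δ by linarith)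
      linarith
    rw [Real.logb]
    have hl2 : (0.6931471803 : ℝ) < Real.log 2 := Real.log_two_gt_d9
    rw [div_le_iff₀ (by linarith)]
    nlinarith

lemma budget_bound (k : ℕ) :
    ((2 ^ (k + 3) * (2 ^ 2 ^ (k + 1) * 2 ^ 2 ^ (k + 3) + 2) : ℕ) : ℝ) ≤
      (2:ℝ) ^ 2 ^ (k + 3) +
      (2:ℝ) ^ (2 * k + 7) / Real.logb 2 (1 + ((2:ℝ) ^ 2 ^ (2 * k + 7))⁻¹) := by
  set δ : ℝ := ((2:ℝ) ^ 2 ^ (2 * k + 7))⁻¹ with hδ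
  obtain ⟨hlpos, hlle⟩ := logb_small k
  have hδ0 : 0 < δ := by positivity
  have step1 : ((2 ^ (k + 3) * (2 ^ 2 ^ (k + 1) * 2 ^ 2 ^ (k + 3) + 2) : ℕ) : ℝ) ≤
      (2:ℝ) ^ (2 * k + 6 + 2 ^ (2 * k + 7)) := by
    have := budget_nat_bound k
    calc ((2 ^ (k + 3) * (2 ^ 2 ^ (k + 1) * 2 ^ 2 ^ (k + 3) + 2) : ℕ) : ℝ)
        ≤ ((2 ^ (2 * k + 6 + 2 ^ (2 * k + 7)) : ℕ) : ℝ) := by exact_mod_cast this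
      _ = (2:ℝ) ^ (2 * k + 6 + 2 ^ (2 * k + 7)) := by push_cast; ring
  have step2 : (2:ℝ) ^ (2 * k + 6 + 2 ^ (2 * k + 7)) ≤
      (2:ℝ) ^ (2 * k + 7) / Real.logb 2 (1 + δ) := by
    rw [le_div_iff₀ hlpos]
    calc (2:ℝ) ^ (2 * k + 6 + 2 ^ (2 * k + 7)) * Real.logb 2 (1 + δ)
        ≤ (2:ℝ) ^ (2 * k + 6 + 2 ^ (2 * k + 7)) * (2 * δ) := by
          apply mul_le_mul_of_nonneg_left hlle (by positivity)
      _ = (2:ℝ) ^ (2 * k + 7) := by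
          rw [hδ, pow_add]
          field_simp
          ring
  have hpos : (0:ℝ) ≤ (2:ℝ) ^ 2 ^ (k + 3) := by positivity
  linarith

end Aux6
section Aux7
open Classical
variable {N : ℕ}

lemma Gm_filter_eq (k : ℕ) (P : Finset (Fin N → Bool)) (x : (Fin N → Bool) → ℝ)
    (g : Fin N → Option Bool) (hx0 : ∀ f ∈ P, 0 ≤ x f) :
    Gm k (P.filter (fun f => PSubF g f ∧ 0 < x f)) x g = Gm k P x g := by
  unfold Gm
  congr 1
  ext v
  simp only [Set.mem_setOf_eq]
  have hcond : ∀ h : Fin N → Option Bool, PSub g h →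
      Ev (P.filter (fun f => PSubF g f ∧ 0 < x f)) x h = Ev P x h := by
    intro h hsub
    apply Ev_filter
    intro f hf hsubf hnq
    rcases (hx0 f hf).lt_or_eq with hlt | heq
    · exact absurd ⟨hsub.subF hsubf, hlt⟩ hnq
    · exact heq.symm
  constructor
  · rintro ⟨h, h1, h2, rfl⟩; exact ⟨h, h1, h2, (hcond h h1)⟩
  · rintro ⟨h, h1, h2, rfl⟩; exact ⟨h, h1, h2, (hcond h h1).symm⟩

lemma filter_nonempty_of_Gm_pos {k : ℕ} {P : Finset (Fin N → Bool)}
    {x : (Fin N → Bool) → ℝ} {h : Fin N → Option Bool}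
    (hx0 : ∀ f ∈ P, 0 ≤ x f) (hpos : 0 < Gm k P x h) :
    (P.filter (fun f => PSubF h f ∧ 0 < x f)).Nonempty := by
  have h1 : 0 < Ev P x h :=
    lt_of_lt_of_le hpos (Gm_le (PSub.refl h) (by simp))
  by_contra hemp
  rw [Finset.not_nonempty_iff_eq_empty, Finset.filter_eq_empty_iff] at hemp
  have hzero : Ev P x h = 0 := by
    rw [Ev]
    rw [Finset.sum_eq_zero, mul_zero]
    intro f hf
    by_cases hc : PSubF h f
    · rw [if_pos hc]
      rcases (hx0 f hf).lt_or_eq with hlt | heq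
      · exact absurd ⟨hc, hlt⟩ (hemp hf)
      · exact heq.symm
    · rw [if_neg hc]
  rw [hzero] at h1
  exact lt_irrefl 0 h1

lemma mk_sub_creature {k N : ℕ} {φ : ℕ → ℕ} (t : Creature k N φ)
    (h : Fin N → Option Bool) (x : (Fin N → Bool) → ℝ)
    (hcard : (pdom h).card ≤ φ (k - (t.n - 1)))
    (hne : (t.P.filter (fun f => PSubF h f ∧ 0 < x f)).Nonempty) :
    ∃ s : Creature k N φ, s.n = t.n - 1 ∧ s.g = h ∧
      s.P = t.P.filter (fun f => PSubF h f ∧ 0 < x f) :=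
  ⟨⟨t.n - 1, h, t.P.filter (fun f => PSubF h f ∧ 0 < x f),
    le_trans (Nat.sub_le _ _) t.n_le, hcard, hne,
    fun f hf => (Finset.mem_filter.1 hf).2.1⟩, rfl, rfl, rfl⟩

end Aux7

/-- the `k`-creature averaging functions `F*` are nice:
monotonicity (α), homogeneity (γ), upper semicontinuity-type approximation (δ),
and the splitting property (β). -/
theorem fstar_is_nice
    (k : ℕ) (φ : ℕ → ℕ) (hφ : PhiCond k φ) (t : Creature k (Nval k φ) φ) :
    (∀ r r' : (Fin (Nval k φ) → Bool) → ℝ,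
      (∀ f ∈ t.P, r f ∈ Set.Icc (0 : ℝ) 1) → (∀ f ∈ t.P, r' f ∈ Set.Icc (0 : ℝ) 1) →
      (∀ f ∈ t.P, r f ≤ r' f) → Fstar t r ≤ Fstar t r') ∧
    (∀ b : ℝ, b ∈ Set.Icc (0 : ℝ) 1 →
      ∀ r : (Fin (Nval k φ) → Bool) → ℝ, (∀ f ∈ t.P, r f ∈ Set.Icc (0 : ℝ) 1) →
      Fstar t (fun f => b * r f) = b * Fstar t r) ∧
    (∀ r : (Fin (Nval k φ) → Bool) → ℝ, (∀ f ∈ t.P, r f ∈ Set.Icc (0 : ℝ) 1) →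
      ∀ ε : ℝ, 0 < ε →
      ∃ r' : (Fin (Nval k φ) → Bool) → ℝ, (∀ f ∈ t.P, r f < r' f) ∧
        ∀ r'' : (Fin (Nval k φ) → Bool) → ℝ,
          (∀ f ∈ t.P, r'' f ∈ Set.Icc (0 : ℝ) 1) →
          (∀ f ∈ t.P, r f ≤ r'' f ∧ r'' f < r' f) →
          Fstar t r'' < Fstar t r + ε) ∧
    (2 ≤ t.n →
      ∀ r r0 r1 : (Fin (Nval k φ) → Bool) → ℝ,
      (∀ f ∈ t.P, r f ∈ Set.Icc (0 : ℝ) 1 ∧ r0 f ∈ Set.Icc (0 : ℝ) 1 ∧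
        r1 f ∈ Set.Icc (0 : ℝ) 1) →
      (∀ f ∈ t.P, r f ≤ r0 f + r1 f) →
      ((2 : ℝ) ^ (2 ^ k))⁻¹ ≤ Fstar t r →
      ∃ c0 c1 : ℝ, ∃ s0 s1 : Creature k (Nval k φ) φ,
        SigmaRel s0 t ∧ SigmaRel s1 t ∧
        c0 + c1 = (1 - ((2 : ℝ) ^ (2 ^ k))⁻¹) * Fstar t r ∧
        (0 < c0 → t.n - 1 ≤ s0.n ∧ (∀ f ∈ s0.P, 0 < r0 f) ∧ c0 ≤ Fstar s0 r0) ∧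
        (0 < c1 → t.n - 1 ≤ s1.n ∧ (∀ f ∈ s1.P, 0 < r1 f) ∧ c1 ≤ Fstar s1 r1)) := by
  classical
  refine ⟨?_, ?_, ?_, ?_⟩
  -- (α) monotonicity
  · intro r r' _ _ hle
    obtain ⟨h, h1, h2, heq⟩ := exists_Gm_eq k t.P r' t.g
    rw [Fstar_eq_Gm, Fstar_eq_Gm, heq]
    exact le_trans (Gm_le h1 h2) (Ev_mono hle)
  -- (γ) homogeneity
  · intro b hb r _
    rw [Fstar_eq_Gm, Fstar_eq_Gm]
    apply le_antisymm
    · obtain ⟨h, h1, h2, heq⟩ := exists_Gm_eq k t.P r t.g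
      calc Gm k t.P (fun f => b * r f) t.g ≤ Ev t.P (fun f => b * r f) h := Gm_le h1 h2
        _ = b * Ev t.P r h := Ev_smul b
        _ = b * Gm k t.P r t.g := by rw [heq]
    · obtain ⟨h, h1, h2, heq⟩ := exists_Gm_eq k t.P (fun f => b * r f) t.g
      rw [heq, Ev_smul b]
      exact mul_le_mul_of_nonneg_left (Gm_le h1 h2) hb.1
  -- (δ) approximation
  · intro r _ ε hε
    set δ : ℝ := ε / (t.P.card + 1) with hδdef
    have hcp : (0:ℝ) < t.P.card + 1 := by positivity
    have hδ : 0 < δ := by positivity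
    refine ⟨fun f => r f + δ, fun f _ => by show r f < r f + δ; linarith, ?_⟩
    intro r'' _ hmid
    obtain ⟨h, h1, h2, heq⟩ := exists_Gm_eq k t.P r t.g
    have hw1 : (2:ℝ) ^ (((pdom h).card : ℤ) - (Nval k φ : ℤ)) ≤ 1 := by
      apply zpow_le_one_of_nonpos₀ one_le_two
      have : (pdom h).card ≤ Nval k φ := by
        simpa using Finset.card_le_card (Finset.subset_univ (pdom h))
      omega
    have hsum : (∑ f ∈ t.P, if PSubF h f then r'' f else 0)
        ≤ (∑ f ∈ t.P, if PSubF h f then r f else 0) + t.P.card * δ := by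
      calc (∑ f ∈ t.P, if PSubF h f then r'' f else 0)
          ≤ ∑ f ∈ t.P, ((if PSubF h f then r f else 0) + δ) := by
            apply Finset.sum_le_sum
            intro f hf
            have h1' : r f ≤ r'' f := (hmid f hf).1
            have h2' : r'' f < r f + δ := by simpa using (hmid f hf).2
            by_cases hc : PSubF h f <;> simp [hc] <;> linarith
        _ = (∑ f ∈ t.P, if PSubF h f then r f else 0) + t.P.card * δ := by
            rw [Finset.sum_add_distrib, Finset.sum_const, nsmul_eq_mul]
    have hEv : Ev t.P r'' h ≤ Ev t.P r h + t.P.card * δ := by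
      rw [Ev, Ev]
      calc (2:ℝ) ^ (((pdom h).card : ℤ) - (Nval k φ : ℤ)) * (∑ f ∈ t.P, if PSubF h f then r'' f else 0)
          ≤ (2:ℝ) ^ (((pdom h).card : ℤ) - (Nval k φ : ℤ)) *
              ((∑ f ∈ t.P, if PSubF h f then r f else 0) + t.P.card * δ) :=
            mul_le_mul_of_nonneg_left hsum (le_of_lt (two_zpow_pos _))
        _ = (2:ℝ) ^ (((pdom h).card : ℤ) - (Nval k φ : ℤ)) *
              (∑ f ∈ t.P, if PSubF h f then r f else 0)
            + (2:ℝ) ^ (((pdom h).card : ℤ) - (Nval k φ : ℤ)) * (t.P.card * δ) := by ring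
        _ ≤ (2:ℝ) ^ (((pdom h).card : ℤ) - (Nval k φ : ℤ)) *
              (∑ f ∈ t.P, if PSubF h f then r f else 0) + t.P.card * δ := by
            have : (0:ℝ) ≤ t.P.card * δ := by positivity
            nlinarith
    have hcardδ : (t.P.card : ℝ) * δ < ε := by
      rw [hδdef]
      rw [mul_div_assoc']
      rw [div_lt_iff₀ hcp]
      nlinarith
    have hle1 : Fstar t r'' ≤ Ev t.P r'' h := by
      rw [Fstar_eq_Gm]; exact Gm_le h1 h2
    have : Fstar t r = Ev t.P r h := by rw [Fstar_eq_Gm, heq]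
    linarith
  -- (β) splitting
  · intro hn r r0 r1 hbnd hsum ha
    have hr0nn : ∀ f ∈ t.P, 0 ≤ r0 f := fun f hf => (hbnd f hf).2.1.1
    have hr1nn : ∀ f ∈ t.P, 0 ≤ r1 f := fun f hf => (hbnd f hf).2.2.1
    have hr1le : ∀ f ∈ t.P, r1 f ≤ 1 := fun f hf => (hbnd f hf).2.2.2
    set ε : ℝ := ((2 : ℝ) ^ (2 ^ k))⁻¹ with hεdef
    have hεpos : 0 < ε := by positivity
    have hεhalf : ε ≤ 1/2 := by
      rw [hεdef]
      have h2 : (2:ℝ) ≤ (2:ℝ) ^ (2 ^ k) := by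
        calc (2:ℝ) = 2 ^ 1 := by norm_num
          _ ≤ (2:ℝ) ^ (2 ^ k) := pow_le_pow_right₀ one_le_two Nat.one_le_two_pow
      have := inv_anti₀ (by norm_num : (0:ℝ) < 2) h2
      linarith [this]
    have hapos : 0 < Fstar t r := lt_of_lt_of_le hεpos ha
    set a : ℝ := Fstar t r with hadef
    set M : ℕ := 2 ^ 2 ^ (k + 1) * 2 ^ 2 ^ (k + 3) with hM
    set B : ℕ := 2 ^ (k + 3) * (M + 2) with hB
    have hbudget : ∀ h : Fin (Nval k φ) → Option Bool, PSub t.g h →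
        (pdom h \ pdom t.g).card ≤ B → (pdom h).card ≤ φ (k - (t.n - 1)) := by
      intro h hsubh hcardh
      have e1 : (pdom h).card ≤ (pdom t.g).card + B := by
        have d1 : (pdom h \ pdom t.g).card = (pdom h).card - (pdom t.g).card :=
          Finset.card_sdiff_of_subset (pdom_mono hsubh)
        have d2 := Finset.card_le_card (pdom_mono hsubh)
        omega
      have e2 : ((pdom t.g).card : ℝ) ≤ φ (k - t.n) := by exact_mod_cast t.g_card
      have e3 := budget_bound k
      rw [← hM, ← hB] at e3
      have e4 := hφ.2 (k - t.n)
      have e5 : ((pdom h).card : ℝ) < φ (k - t.n + 1) := by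
        have e1' : ((pdom h).card : ℝ) ≤ ((pdom t.g).card : ℝ) + (B : ℝ) := by
          exact_mod_cast e1
        linarith
      have e6 : (pdom h).card ≤ φ (k - t.n + 1) := by exact_mod_cast e5.le
      have e7 : k - (t.n - 1) = k - t.n + 1 := by have := t.n_le; omega
      rw [e7]; exact e6
    obtain ⟨h0max, hmem0, hmax0⟩ := Finset.exists_max_image
      (Finset.univ.filter (fun h : Fin (Nval k φ) → Option Bool =>
        PSub t.g h ∧ (pdom h \ pdom t.g).card ≤ B))
      (fun h => Gm k t.P r0 h)
      ⟨t.g, Finset.mem_filter.2 ⟨Finset.mem_univ _, PSub.refl _, by simp⟩⟩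
    rw [Finset.mem_filter] at hmem0
    have hmax_le : ∀ h : Fin (Nval k φ) → Option Bool, PSub t.g h →
        (pdom h \ pdom t.g).card ≤ B → Gm k t.P r0 h ≤ Gm k t.P r0 h0max :=
      fun h hs hc => hmax0 h (Finset.mem_filter.2 ⟨Finset.mem_univ _, hs, hc⟩)
    set G : ℝ := Gm k t.P r0 h0max with hG
    have hGnn : 0 ≤ G := by
      rw [hG]
      exact le_Gm (fun h' _ _ => Ev_nonneg hr0nn)
    by_cases hcase : (1 - ε) * a ≤ G
    · -- Case 1: all the mass can go to side 0
      have hc0pos : 0 < (1 - ε) * a := by nlinarith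
      have hGpos : 0 < G := lt_of_lt_of_le hc0pos hcase
      obtain ⟨s0, hs0n, hs0g, hs0P⟩ := mk_sub_creature t h0max r0
        (hbudget h0max hmem0.2.1 hmem0.2.2)
        (filter_nonempty_of_Gm_pos hr0nn (hG ▸ hGpos))
      refine ⟨(1 - ε) * a, 0, s0, t,
        ⟨hs0n.le.trans (Nat.sub_le _ _), by rw [hs0g]; exact hmem0.2.1,
          by rw [hs0P]; exact Finset.filter_subset _ _⟩,
        ⟨le_rfl, PSub.refl _, Finset.Subset.refl _⟩, by ring, ?_, ?_⟩
      · intro _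
        refine ⟨hs0n.ge, fun f hf => ?_, ?_⟩
        · rw [hs0P] at hf; exact (Finset.mem_filter.1 hf).2.2
        · have hFs0 : Fstar s0 r0 = Gm k t.P r0 h0max := by
            rw [Fstar_eq_Gm, hs0P, hs0g]
            exact Gm_filter_eq k t.P r0 h0max hr0nn
          rw [hFs0, ← hG]; exact hcase
      · intro h0'; exact absurd h0' (lt_irrefl 0)
    · -- Case 2
      push_neg at hcase
      set c1 : ℝ := (1 - ε) * a - G with hc1def
      have hc1pos : 0 < c1 := by rw [hc1def]; linarith
      have hfind : ∃ h1 : Fin (Nval k φ) → Option Bool, PSub t.g h1 ∧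
          (pdom h1 \ pdom t.g).card ≤ B ∧ c1 ≤ Gm k t.P r1 h1 := by
        by_contra hcon
        push_neg at hcon
        have hcon' : ∀ h : Fin (Nval k φ) → Option Bool, PSub t.g h →
            (pdom h \ pdom t.g).card ≤ B → Gm k t.P r1 h < c1 := hcon
        have hg0 : Gm k t.P r0 t.g ≤ G := hmax_le t.g (PSub.refl _) (by simp)
        obtain ⟨hs0, hsub0, hcard0, hEv0⟩ := exists_Gm_eq k t.P r0 t.g
        have hEr : a ≤ Ev t.P r hs0 := by rw [hadef, Fstar_eq_Gm]; exact Gm_le hsub0 hcard0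
        have hsubadd : Ev t.P r hs0 ≤ Ev t.P r0 hs0 + Ev t.P r1 hs0 := Ev_subadd hsum
        have hstart : c1 + ε * a ≤ Ev t.P r1 hs0 := by
          have hb1 : Ev t.P r0 hs0 ≤ G := by rw [← hEv0]; exact hg0
          have hb2 : c1 + ε * a = a - G := by rw [hc1def]; ring
          linarith
        have hB' : 2 ^ (k + 3) * (M + 1) ≤ B := by
          rw [hB]; exact Nat.mul_le_mul_left _ (by omega)
        obtain ⟨hfin, _, hfinval⟩ := growth k t.P r1 t.g c1 (ε * a) hc1pos
          (by positivity) M B hB' hcon' hs0 hsub0 hcard0 hstart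
        have hle1 : Ev t.P r1 hfin ≤ 1 := Ev_le_one hr1le hr1nn
        set q : ℝ := ((2:ℝ) ^ 2 ^ (k + 3))⁻¹ with hq
        have hq0 : (0:ℝ) ≤ q := by positivity
        have hBern : 1 + (M:ℝ) * q ≤ (1 + q) ^ M := one_add_mul_le_pow (by linarith) M
        have hMq : (M:ℝ) * q = 2 ^ 2 ^ (k + 1) := by
          rw [hM, hq]; push_cast; field_simp
        have hee : ε * ε * (2:ℝ) ^ 2 ^ (k + 1) = 1 := by
          rw [hεdef]
          have hpow : (2:ℝ) ^ 2 ^ (k + 1) = 2 ^ 2 ^ k * 2 ^ 2 ^ k := by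
            rw [← pow_add]
            congr 1
            rw [pow_succ]; ring
          rw [hpow]; field_simp
        have hεa : ε * ε ≤ ε * a := mul_le_mul_of_nonneg_left ha hεpos.le
        have h1 : ε * ε * ((M:ℝ) * q) ≤ ε * a * (1 + q) ^ M := by
          have t1 : ε * a * ((M:ℝ) * q) ≤ ε * a * (1 + (M:ℝ) * q) := by
            nlinarith [mul_pos hεpos hapos, Nat.cast_nonneg (α := ℝ) M]
          have t2 : ε * a * (1 + (M:ℝ) * q) ≤ ε * a * (1 + q) ^ M :=
            mul_le_mul_of_nonneg_left hBern (by positivity)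
          have t3 : ε * ε * ((M:ℝ) * q) ≤ ε * a * ((M:ℝ) * q) := by
            apply mul_le_mul_of_nonneg_right hεa (by rw [hMq]; positivity)
          linarith
        rw [hMq, hee] at h1
        linarith
      obtain ⟨h1, hsub1, hcard1, hGm1⟩ := hfind
      obtain ⟨s1, hs1n, hs1g, hs1P⟩ := mk_sub_creature t h1 r1
        (hbudget h1 hsub1 hcard1)
        (filter_nonempty_of_Gm_pos hr1nn (lt_of_lt_of_le hc1pos hGm1))
      have hFs1 : Fstar s1 r1 = Gm k t.P r1 h1 := by
        rw [Fstar_eq_Gm, hs1P, hs1g]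
        exact Gm_filter_eq k t.P r1 h1 hr1nn
      have hs1rel : SigmaRel s1 t :=
        ⟨hs1n.le.trans (Nat.sub_le _ _), by rw [hs1g]; exact hsub1,
          by rw [hs1P]; exact Finset.filter_subset _ _⟩
      have hs1good : 0 < c1 → t.n - 1 ≤ s1.n ∧ (∀ f ∈ s1.P, 0 < r1 f) ∧ c1 ≤ Fstar s1 r1 := by
        intro _
        refine ⟨hs1n.ge, fun f hf => ?_, by rw [hFs1]; exact hGm1⟩
        rw [hs1P] at hf; exact (Finset.mem_filter.1 hf).2.2
      by_cases hGpos : 0 < G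
      · obtain ⟨s0, hs0n, hs0g, hs0P⟩ := mk_sub_creature t h0max r0
          (hbudget h0max hmem0.2.1 hmem0.2.2)
          (filter_nonempty_of_Gm_pos hr0nn (hG ▸ hGpos))
        refine ⟨G, c1, s0, s1,
          ⟨hs0n.le.trans (Nat.sub_le _ _), by rw [hs0g]; exact hmem0.2.1,
            by rw [hs0P]; exact Finset.filter_subset _ _⟩,
          hs1rel, by rw [hc1def]; ring, ?_, hs1good⟩
        intro _
        refine ⟨hs0n.ge, fun f hf => ?_, ?_⟩
        · rw [hs0P] at hf; exact (Finset.mem_filter.1 hf).2.2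
        · have hFs0 : Fstar s0 r0 = Gm k t.P r0 h0max := by
            rw [Fstar_eq_Gm, hs0P, hs0g]
            exact Gm_filter_eq k t.P r0 h0max hr0nn
          rw [hFs0, ← hG]
      · exact ⟨G, c1, t, s1,
          ⟨le_rfl, PSub.refl _, Finset.Subset.refl _⟩, hs1rel,
          by rw [hc1def]; ring, fun hG' => absurd hG' hGpos, hs1good⟩

end MeasuredCreatures
end

section
/- Let p ∈ Q^mt_∅(K,Σ,F) (i.e. p ∈ Q^tree_∅(K,Σ) with μ^F(p) > 0) and let 0 < ε < 1. Then there is a node η ∈ T^p such that μ^F_p(η) ≥ 1 − ε. -/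
namespace MeasuredTrees

/-- `η` is a valid node for `H`: a finite sequence with `η i ∈ H i` for all `i < lh η`. -/
def ValidNode (H : ℕ → Finset ℕ) (η : List ℕ) : Prop :=
  ∀ (i : ℕ) (h : i < η.length), η.get ⟨i, h⟩ ∈ H i

/-- A local tree-creature for `H`: a node `η_t`, a nonnegative norm, and a nonempty set
`pos(t)` of nodes of length `lh(η_t)+1` properly extending `η_t`. -/
structure TCreature (H : ℕ → Finset ℕ) where
  node : List ℕ
  node_ok : ValidNode H node
  nor : ℝ
  nor_nonneg : 0 ≤ nor
  pos : Finset (List ℕ)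
  pos_ne : pos.Nonempty
  pos_ok : ∀ ν ∈ pos, node <+: ν ∧ ν.length = node.length + 1 ∧ ValidNode H ν

/-- A measured tree creating triple `(K, Σ, F)` for `H` (data part). -/
structure MTriple (H : ℕ → Finset ℕ) where
  K : Set (TCreature H)
  Sig : TCreature H → Set (TCreature H)
  F : TCreature H → (List ℕ → ℝ) → ℝ

variable {H : ℕ → Finset ℕ}

/-- The structural requirements: `(K,Σ)` is a strongly finitary local tree-creating
pair, each `H m` has at least two elements, and each `F t` is a map
`[0,1]^{pos t} → [0,1]` (represented on total functions, depending only on the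
values on `pos t`). -/
structure MTriple.Good (T : MTriple H) : Prop where
  H_two : ∀ m : ℕ, 2 ≤ (H m).card
  sig_mem : ∀ t ∈ T.K, T.Sig t ⊆ T.K
  sig_node : ∀ t s : TCreature H, s ∈ T.Sig t → s.node = t.node
  sig_pos : ∀ t s : TCreature H, s ∈ T.Sig t → s.pos ⊆ t.pos
  sig_trans : ∀ t s : TCreature H, s ∈ T.Sig t → T.Sig s ⊆ T.Sig t
  finitary : ∀ η : List ℕ, {t : TCreature H | t ∈ T.K ∧ t.node = η}.Finite
  F_congr : ∀ (t : TCreature H) (r r' : List ℕ → ℝ),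
    (∀ ν ∈ t.pos, r ν = r' ν) → T.F t r = T.F t r'
  F_mem : ∀ (t : TCreature H) (r : List ℕ → ℝ),
    (∀ ν ∈ t.pos, r ν ∈ Set.Icc (0 : ℝ) 1) → T.F t r ∈ Set.Icc (0 : ℝ) 1

/-- The triple is nice: monotonicity (α), splitting (β), homogeneity (γ) and
approximation (δ). -/
structure MTriple.Nice (T : MTriple H) : Prop where
  mono : ∀ t ∈ T.K, ∀ r r' : List ℕ → ℝ,
    (∀ ν ∈ t.pos, r ν ∈ Set.Icc (0 : ℝ) 1) → (∀ ν ∈ t.pos, r' ν ∈ Set.Icc (0 : ℝ) 1) →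
    (∀ ν ∈ t.pos, r ν ≤ r' ν) → T.F t r ≤ T.F t r'
  split : ∀ t ∈ T.K, 1 < t.nor →
    ∀ r r0 r1 : List ℕ → ℝ,
    (∀ ν ∈ t.pos, r ν ∈ Set.Icc (0 : ℝ) 1 ∧ r0 ν ∈ Set.Icc (0 : ℝ) 1 ∧
      r1 ν ∈ Set.Icc (0 : ℝ) 1) →
    (∀ ν ∈ t.pos, r ν ≤ r0 ν + r1 ν) →
    ((2 : ℝ) ^ (2 ^ t.node.length))⁻¹ ≤ T.F t r →
    ∃ c0 c1 : ℝ, ∃ s0 s1 : TCreature H, s0 ∈ T.Sig t ∧ s1 ∈ T.Sig t ∧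
      c0 + c1 = (1 - ((2 : ℝ) ^ (2 ^ t.node.length))⁻¹) * T.F t r ∧
      (0 < c0 → t.nor - 1 ≤ s0.nor ∧ (∀ ν ∈ s0.pos, 0 < r0 ν) ∧ c0 ≤ T.F s0 r0) ∧
      (0 < c1 → t.nor - 1 ≤ s1.nor ∧ (∀ ν ∈ s1.pos, 0 < r1 ν) ∧ c1 ≤ T.F s1 r1)
  scale : ∀ t ∈ T.K, ∀ b : ℝ, b ∈ Set.Icc (0 : ℝ) 1 →
    ∀ r : List ℕ → ℝ, (∀ ν ∈ t.pos, r ν ∈ Set.Icc (0 : ℝ) 1) →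
    T.F t (fun ν => b * r ν) = b * T.F t r
  approx : ∀ t ∈ T.K, ∀ r : List ℕ → ℝ, (∀ ν ∈ t.pos, r ν ∈ Set.Icc (0 : ℝ) 1) →
    ∀ ε : ℝ, 0 < ε →
    ∃ r' : List ℕ → ℝ, (∀ ν ∈ t.pos, r ν < r' ν) ∧
      ∀ r'' : List ℕ → ℝ, (∀ ν ∈ t.pos, r'' ν ∈ Set.Icc (0 : ℝ) 1) →
        (∀ ν ∈ t.pos, r ν ≤ r'' ν ∧ r'' ν < r' ν) → T.F t r'' < T.F t r + ε

/-- A condition of `Q^tree_∅(K,Σ)`: a tree of nodes with no maximal elements,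
together with a creature of `K` at every node whose possibilities are exactly the
successors in the tree. -/
structure Cond (T : MTriple H) where
  tree : Set (List ℕ)
  root : List ℕ
  root_mem : root ∈ tree
  root_le : ∀ η ∈ tree, root <+: η
  closed : ∀ η ∈ tree, ∀ ν : List ℕ, root <+: ν → ν <+: η → ν ∈ tree
  c : List ℕ → TCreature H
  c_mem : ∀ η ∈ tree, c η ∈ T.K
  c_node : ∀ η ∈ tree, (c η).node = η
  succ_eq : ∀ η ∈ tree, ∀ ν : List ℕ,
    ((ν ∈ tree ∧ η <+: ν ∧ ν.length = η.length + 1) ↔ ν ∈ (c η).pos)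

variable {T : MTriple H}

/-- The initial segment of length `n` of an infinite sequence. -/
def initSeg (x : ℕ → ℕ) (n : ℕ) : List ℕ := (List.range n).map x

/-- `x` is an ω-branch of the tree of `p` through the node `η`. -/
def IsBranchAt (p : Cond T) (η : List ℕ) (x : ℕ → ℕ) : Prop :=
  initSeg x η.length = η ∧ ∀ n : ℕ, η.length ≤ n → initSeg x n ∈ p.tree

/-- `A` is a front of the tree of `p^{[η]}`: a set of nodes of the tree extending `η`
met by every ω-branch through `η`. -/
def IsFrontAt (p : Cond T) (η : List ℕ) (A : Set (List ℕ)) : Prop :=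
  (∀ ρ ∈ A, ρ ∈ p.tree ∧ η <+: ρ) ∧
  ∀ x : ℕ → ℕ, IsBranchAt p η x → ∃ n : ℕ, initSeg x n ∈ A

/-- `ρ ∈ T[p^{[η]}, A]`, i.e. `ρ` is a node of the tree of `p` extending `η` and lying
(weakly) below some member of `A`. -/
def InCone (p : Cond T) (η : List ℕ) (A : Set (List ℕ)) (ρ : List ℕ) : Prop :=
  ρ ∈ p.tree ∧ η <+: ρ ∧ ∃ ν ∈ A, ρ <+: ν

/-- `m` is the function `μ^f_{p^{[η]},A}` (extended by `0` off `T[p^{[η]},A]`):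
it equals `f` on `A` and satisfies the downward recursion
`m ρ = F_{t^p_ρ}(m ν : ν ∈ pos(t^p_ρ))` on `T[p^{[η]},A] ∖ A`. -/
def IsMuAt (p : Cond T) (η : List ℕ) (A : Set (List ℕ))
    (f : List ℕ → ℝ) (m : List ℕ → ℝ) : Prop :=
  (∀ ρ ∈ A, m ρ = f ρ) ∧
  (∀ ρ : List ℕ, InCone p η A ρ → ρ ∉ A → m ρ = T.F (p.c ρ) m) ∧
  (∀ ρ : List ℕ, ¬ InCone p η A ρ → m ρ = 0)

/-- `μ^F_p(η)`: the infimum over fronts `A` of `p^{[η]}` of `μ^{1_A}_{p^{[η]},A}(η)`. -/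
noncomputable def muAt (p : Cond T) (η : List ℕ) : ℝ :=
  sInf {x : ℝ | ∃ (A : Set (List ℕ)) (m : List ℕ → ℝ),
    IsFrontAt p η A ∧ IsMuAt p η A (fun _ => 1) m ∧ x = m η}

/-- `μ^F(p) = μ^F_p(root p)`. -/
noncomputable def muF (p : Cond T) : ℝ := muAt p p.root

/-- The norm condition (c)₄ defining `Q^tree_4(K,Σ)` : for every `n` the set of nodes
above which all norms are at least `n` contains a front. -/
def Qtree4 (p : Cond T) : Prop :=
  ∀ n : ℕ, ∃ A : Set (List ℕ), IsFrontAt p p.root A ∧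
    ∀ ν ∈ A, ∀ ρ ∈ p.tree, ν <+: ρ → (n : ℝ) ≤ (p.c ρ).nor

/-- The order on conditions: `p ≤ q` iff the tree of `q` is contained in that of `p`
and each creature of `q` belongs to `Σ` of the corresponding creature of `p`. -/
def CondLe (p q : Cond T) : Prop :=
  q.tree ⊆ p.tree ∧ ∀ η ∈ q.tree, q.c η ∈ T.Sig (p.c η)

/-- `p` is normal: `μ^F_p(η) > 0` for every node `η` of the tree of `p`. -/
def Normal (p : Cond T) : Prop := ∀ η ∈ p.tree, 0 < muAt p η

/-- `p` is special: `μ^F_p(η) ≥ 2^(−2^(lh η + 1))` for every node `η`. -/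
def Special (p : Cond T) : Prop :=
  ∀ η ∈ p.tree, ((2 : ℝ) ^ (2 ^ (η.length + 1)))⁻¹ ≤ muAt p η
section Aux
variable {H : ℕ → Finset ℕ} {T : MTriple H}

lemma initSeg_length (x : ℕ → ℕ) (n : ℕ) : (initSeg x n).length = n := by
  simp [initSeg]

lemma initSeg_take (x : ℕ → ℕ) {m n : ℕ} (h : m ≤ n) :
    (initSeg x n).take m = initSeg x m := by
  simp [initSeg, ← List.map_take, List.take_range, Nat.min_eq_left h]

lemma initSeg_prefix (x : ℕ → ℕ) {m n : ℕ} (h : m ≤ n) :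
    initSeg x m <+: initSeg x n := by
  rw [← initSeg_take x h]; exact List.take_prefix _ _

lemma prefix_initSeg {l : List ℕ} {x : ℕ → ℕ} {n : ℕ} (h : l <+: initSeg x n) :
    l = initSeg x l.length := by
  have h1 : l.length ≤ n := by simpa [initSeg_length] using h.length_le
  have := List.prefix_iff_eq_take.1 h
  rw [this, initSeg_take x h1, initSeg_length]

lemma prefix_antisymm {a b : List ℕ} (h1 : a <+: b) (h2 : b <+: a) : a = b :=
  h1.eq_of_length (le_antisymm h1.length_le h2.length_le)

lemma succ_mem (p : Cond T) {η ν : List ℕ} (hη : η ∈ p.tree) (hν : ν ∈ (p.c η).pos) :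
    ν ∈ p.tree ∧ η <+: ν ∧ ν.length = η.length + 1 :=
  (p.succ_eq η hη ν).2 hν

/-- From a node of a subset `S` of the tree closed under passing to some successor,
produce a branch staying in `S`. -/
lemma exists_branch (p : Cond T) (S : Set (List ℕ)) (hS : S ⊆ p.tree)
    (hsel : ∀ ρ ∈ S, ∃ ν ∈ (p.c ρ).pos, ν ∈ S)
    {η ρ₀ : List ℕ} (hη : η ∈ p.tree) (hρ₀ : ρ₀ ∈ S) (hpre : η <+: ρ₀) :
    ∃ x : ℕ → ℕ, IsBranchAt p η x ∧ (∀ n, ρ₀.length ≤ n → initSeg x n ∈ S) ∧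
      initSeg x ρ₀.length = ρ₀ := by
  classical
  have step : ∀ l : {l : List ℕ // l ∈ S}, ∃ ν : {l : List ℕ // l ∈ S},
      l.1 <+: ν.1 ∧ ν.1.length = l.1.length + 1 := by
    rintro ⟨l, hl⟩
    obtain ⟨ν, hν, hνS⟩ := hsel l hl
    obtain ⟨h1, h2, h3⟩ := succ_mem p (hS hl) hν
    exact ⟨⟨ν, hνS⟩, h2, h3⟩
  choose f hf1 hf2 using step
  let g : ℕ → {l : List ℕ // l ∈ S} := fun k => Nat.rec ⟨ρ₀, hρ₀⟩ (fun _ ih => f ih) k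
  have hg0 : (g 0).1 = ρ₀ := rfl
  have hgs : ∀ k, g (k+1) = f (g k) := fun k => rfl
  have hglen : ∀ k, (g k).1.length = ρ₀.length + k := by
    intro k; induction k with
    | zero => rfl
    | succ k ih => rw [hgs, hf2, ih]; omega
  have hgmono : ∀ a b, a ≤ b → (g a).1 <+: (g b).1 := by
    intro a b hab
    induction b with
    | zero => simpa [Nat.le_zero.1 hab] using List.prefix_rfl
    | succ b ih =>
      rcases Nat.lt_or_ge a (b+1) with h | h
      · exact (ih (Nat.lt_succ_iff.1 h)).trans (by rw [hgs]; exact hf1 _)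
      · have : a = b + 1 := le_antisymm hab h
        subst this; exact List.prefix_rfl
  set x : ℕ → ℕ := fun n => (g (n+1)).1.getD n 0 with hx
  have key : ∀ n k, n ≤ ρ₀.length + k → initSeg x n = (g k).1.take n := by
    intro n k hnk
    apply List.ext_getElem
    · simp [initSeg_length, hglen, hnk]
    · intro i h1 h2
      rw [initSeg_length] at h1
      have hi1 : i < (g (i+1)).1.length := by have := hglen (i+1); omega
      have hik : i < (g k).1.length := by have := hglen k; omega
      have hjoint : ∀ a b, a ≤ b → ∀ (hia : i < (g a).1.length) (_hib : i < (g b).1.length), (g a).1[i] = (g b).1[i] := by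
        intro a b hab hia hib
        exact (hgmono a b hab).getElem hia
      have hxval : x i = (g (i+1)).1[i] := by
        simp only [hx, List.getD_eq_getElem?_getD, List.getElem?_eq_getElem hi1]; rfl
      have hval : (g (i+1)).1[i] = (g k).1[i] := by
        rcases Nat.le_total (i+1) k with h | h
        · exact hjoint _ _ h hi1 hik
        · exact (hjoint _ _ h hik hi1).symm
      simp only [initSeg, List.getElem_map, List.getElem_range, List.getElem_take]
      rw [hxval, hval]
  have hinit : ∀ k, initSeg x (ρ₀.length + k) = (g k).1 := by
    intro k
    rw [key _ k le_rfl, List.take_of_length_le (by rw [hglen])]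
  have hS' : ∀ n, ρ₀.length ≤ n → initSeg x n ∈ S := by
    intro n hn
    have : n = ρ₀.length + (n - ρ₀.length) := by omega
    rw [this, hinit]; exact (g _).2
  have htake : ∀ n, n ≤ ρ₀.length → initSeg x n = ρ₀.take n := by
    intro n hn
    have := key n 0 (by omega)
    simpa [hg0] using this
  have hηeq : initSeg x η.length = η := by
    rw [htake _ hpre.length_le, ← List.prefix_iff_eq_take.1 hpre]
  have hρ₀eq : initSeg x ρ₀.length = ρ₀ := by
    rw [htake _ le_rfl, List.take_of_length_le le_rfl]
  refine ⟨x, ⟨hηeq, ?_⟩, hS', hρ₀eq⟩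
  intro n hn
  rcases Nat.le_total ρ₀.length n with h | h
  · exact hS (hS' n h)
  · rw [htake n h]
    refine p.closed ρ₀ (hS hρ₀) _ ?_ (List.take_prefix _ _)
    calc p.root <+: η := p.root_le η hη
    _ <+: ρ₀.take n := by
      rw [← htake n h, ← hηeq]; exact initSeg_prefix x hn

end Aux
open scoped Classical

/-- An antichain of nodes. -/
def Thin (A : Set (List ℕ)) : Prop := ∀ a ∈ A, ∀ b ∈ A, a <+: b → a = b

lemma exists_branch_tree (p : Cond T) {η : List ℕ} (hη : η ∈ p.tree) :
    ∃ x, IsBranchAt p η x := by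
  obtain ⟨x, hx, -⟩ := exists_branch p p.tree subset_rfl
    (fun ρ hρ => by
      obtain ⟨ν, hν⟩ := (p.c ρ).pos_ne
      exact ⟨ν, hν, (succ_mem p hρ hν).1⟩) hη hη List.prefix_rfl
  exact ⟨x, hx⟩

lemma front_nonempty (p : Cond T) {η : List ℕ} (hη : η ∈ p.tree) {A : Set (List ℕ)}
    (hA : IsFrontAt p η A) : ∃ a ∈ A, η <+: a := by
  obtain ⟨x, hx⟩ := exists_branch_tree p hη
  obtain ⟨n, hn⟩ := hA.2 x hx
  exact ⟨_, hn, (hA.1 _ hn).2⟩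

lemma inCone_self (p : Cond T) {η : List ℕ} (hη : η ∈ p.tree) {A : Set (List ℕ)}
    (hA : IsFrontAt p η A) : InCone p η A η := by
  obtain ⟨a, ha, hpre⟩ := front_nonempty p hη hA
  exact ⟨hη, List.prefix_rfl, a, ha, hpre⟩

lemma inCone_mono (p : Cond T) {η : List ℕ} {A B : Set (List ℕ)} (h : A ⊆ B)
    {ρ : List ℕ} (hρ : InCone p η A ρ) : InCone p η B ρ := by
  obtain ⟨h1, h2, a, ha, hpre⟩ := hρ
  exact ⟨h1, h2, a, h ha, hpre⟩

/-- Bar induction over the cone determined by a thin front. -/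
lemma bar_induction (p : Cond T) {η : List ℕ} (hη : η ∈ p.tree) {A : Set (List ℕ)}
    (hA : IsFrontAt p η A) (hthin : Thin A) (P : List ℕ → Prop)
    (base : ∀ ρ ∈ A, P ρ)
    (step : ∀ ρ, InCone p η A ρ → ρ ∉ A →
      (∀ ν ∈ (p.c ρ).pos, InCone p η A ν → P ν) → P ρ) :
    ∀ ρ, InCone p η A ρ → P ρ := by
  by_contra hcon
  push_neg at hcon
  obtain ⟨ρ₀, hρ₀c, hρ₀P⟩ := hcon
  set S := {ρ | InCone p η A ρ ∧ ρ ∉ A ∧ ¬ P ρ} with hSdef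
  have hρ₀S : ρ₀ ∈ S := ⟨hρ₀c, fun h0 => hρ₀P (base _ h0), hρ₀P⟩
  have hS : S ⊆ p.tree := fun ρ hρ => hρ.1.1
  have hsel : ∀ ρ ∈ S, ∃ ν ∈ (p.c ρ).pos, ν ∈ S := by
    rintro ρ ⟨hc, hnA, hnP⟩
    by_contra hno
    push_neg at hno
    refine hnP (step ρ hc hnA ?_)
    intro ν hν hνc
    by_contra hνP
    exact (hno ν hν) ⟨hνc, fun h => hνP (base _ h), hνP⟩
  obtain ⟨x, hx, hxS, hxρ₀⟩ := exists_branch p S hS hsel hη hρ₀S hρ₀c.2.1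
  obtain ⟨n, hn⟩ := hA.2 x hx
  rcases Nat.lt_or_ge n ρ₀.length with h | h
  · -- initSeg x n is a proper prefix of ρ₀, but ρ₀ lies below an element of A
    have hpre : initSeg x n <+: ρ₀ := by
      rw [← hxρ₀]; exact initSeg_prefix x h.le
    obtain ⟨-, -, b, hb, hρb⟩ := hρ₀c
    have : initSeg x n = b := hthin _ hn _ hb (hpre.trans hρb)
    have : ρ₀ = b := prefix_antisymm hρb (this ▸ hpre)
    exact hρ₀S.2.1 (this ▸ hb)
  · exact (hxS n h).2.1 hn

/-- The set of minimal elements of `A`. -/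
def thinned (A : Set (List ℕ)) : Set (List ℕ) := {a ∈ A | ∀ b ∈ A, b <+: a → b = a}

lemma thinned_subset (A : Set (List ℕ)) : thinned A ⊆ A := fun _ h => h.1

lemma thinned_thin (A : Set (List ℕ)) : Thin (thinned A) :=
  fun a ha b hb hab => hb.2 a ha.1 hab

lemma exists_thinned_prefix {A : Set (List ℕ)} :
    ∀ n, ∀ a ∈ A, a.length ≤ n → ∃ b ∈ thinned A, b <+: a := by
  intro n
  induction n with
  | zero =>
    intro a ha hlen
    refine ⟨a, ⟨ha, ?_⟩, List.prefix_rfl⟩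
    intro b hb hba
    have : b.length = a.length := by have := hba.length_le; omega
    exact hba.eq_of_length this
  | succ n ih =>
    intro a ha hlen
    by_cases h : ∀ b ∈ A, b <+: a → b = a
    · exact ⟨a, ⟨ha, h⟩, List.prefix_rfl⟩
    · push_neg at h
      obtain ⟨b, hb, hba, hne⟩ := h
      have hblen : b.length < a.length := by
        rcases Nat.lt_or_ge b.length a.length with h' | h'
        · exact h'
        · exact absurd (hba.eq_of_length (le_antisymm hba.length_le h')) hne
      obtain ⟨c, hc, hcb⟩ := ih b hb (by omega)
      exact ⟨c, hc, hcb.trans hba⟩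

lemma thinned_front (p : Cond T) {η : List ℕ} {A : Set (List ℕ)}
    (hA : IsFrontAt p η A) : IsFrontAt p η (thinned A) := by
  constructor
  · exact fun ρ hρ => hA.1 ρ (thinned_subset A hρ)
  · intro x hx
    obtain ⟨n, hn⟩ := hA.2 x hx
    obtain ⟨b, hb, hpre⟩ := exists_thinned_prefix _ _ hn le_rfl
    exact ⟨b.length, by rw [← prefix_initSeg hpre]; exact hb⟩

lemma mem_thinned_of_cone {p : Cond T} {η : List ℕ} {A : Set (List ℕ)}
    {ρ : List ℕ} (hρ : InCone p η (thinned A) ρ) (hρA : ρ ∈ A) : ρ ∈ thinned A := by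
  obtain ⟨-, -, a, ha, hpre⟩ := hρ
  have := ha.2 ρ hρA hpre
  exact this ▸ ha

lemma cone_succ_stay {p : Cond T} {η : List ℕ} {A : Set (List ℕ)}
    {σ τ : List ℕ} (hσ : InCone p η (thinned A) σ) (hσA : σ ∉ thinned A)
    (hτpos : τ ∈ (p.c σ).pos) (hτ : InCone p η A τ) : InCone p η (thinned A) τ := by
  obtain ⟨hτt, hτη, a', ha', hτa'⟩ := hτ
  obtain ⟨b, hb, hba'⟩ := exists_thinned_prefix a'.length a' ha' le_rfl
  rcases List.prefix_or_prefix_of_prefix hτa' hba' with h | h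
  · exact ⟨hτt, hτη, b, hb, h⟩
  · -- b <+: τ; show this forces a contradiction unless b = τ
    by_cases hbτ : b = τ
    · exact ⟨hτt, hτη, b, hb, hbτ ▸ List.prefix_rfl⟩
    · exfalso
      have hσtree : σ ∈ p.tree := hσ.1
      have hlen : τ.length = σ.length + 1 := (succ_mem p hσtree hτpos).2.2
      have hστ : σ <+: τ := (succ_mem p hσtree hτpos).2.1
      have hblen : b.length ≤ σ.length := by
        have h1 := h.length_le
        rcases Nat.lt_or_ge b.length τ.length with h' | h'
        · omega
        · exact absurd (h.eq_of_length (le_antisymm h1 h')) hbτ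
      have hbσ : b <+: σ := List.prefix_of_prefix_length_le h hστ hblen
      obtain ⟨-, -, a, ha, hσa⟩ := hσ
      have : b = a := thinned_thin A _ hb _ ha (hbσ.trans hσa)
      have : σ = a := prefix_antisymm hσa (this ▸ hbσ)
      exact hσA (this ▸ ha)

/-- Restriction of a `μ`-witness for a front to its thinned front. -/
lemma thinned_isMuAt (hG : T.Good) (p : Cond T) {η : List ℕ} (hη : η ∈ p.tree)
    {A : Set (List ℕ)} (hA : IsFrontAt p η A) {m : List ℕ → ℝ}
    (hm : IsMuAt p η A (fun _ => 1) m) :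
    IsMuAt p η (thinned A) (fun _ => 1)
      (fun ρ => if InCone p η (thinned A) ρ then m ρ else 0) := by
  refine ⟨?_, ?_, ?_⟩
  · intro ρ hρ
    have hc : InCone p η (thinned A) ρ := ⟨(hA.1 ρ (thinned_subset A hρ)).1,
      (hA.1 ρ (thinned_subset A hρ)).2, ρ, hρ, List.prefix_rfl⟩
    simp only [if_pos hc]
    exact hm.1 ρ (thinned_subset A hρ)
  · intro ρ hρ hρA
    have hρA' : ρ ∉ A := fun h => hρA (mem_thinned_of_cone hρ h)
    have hρc : InCone p η A ρ := inCone_mono p (thinned_subset A) hρ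
    simp only [if_pos hρ]
    rw [hm.2.1 ρ hρc hρA']
    refine hG.F_congr _ _ _ ?_
    intro ν hν
    by_cases h : InCone p η (thinned A) ν
    · rw [if_pos h]
    · rw [if_neg h]
      have : ¬ InCone p η A ν := fun h' => h (cone_succ_stay hρ hρA hν h')
      exact hm.2.2 ν this
  · intro ρ hρ; simp only [if_neg hρ]
/-- Uniqueness of the `μ`-function over a thin front. -/
lemma muAt_unique (p : Cond T) (hG : T.Good) {η : List ℕ} (hη : η ∈ p.tree)
    {A : Set (List ℕ)} (hA : IsFrontAt p η A) (hthin : Thin A) {f m m' : List ℕ → ℝ}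
    (h1 : IsMuAt p η A f m) (h2 : IsMuAt p η A f m') : m = m' := by
  have key : ∀ ρ, InCone p η A ρ → m ρ = m' ρ := by
    refine bar_induction p hη hA hthin _ ?_ ?_
    · intro ρ hρ; rw [h1.1 ρ hρ, h2.1 ρ hρ]
    · intro ρ hρ hρA ih
      rw [h1.2.1 ρ hρ hρA, h2.2.1 ρ hρ hρA]
      refine hG.F_congr _ _ _ ?_
      intro ν hν
      by_cases h : InCone p η A ν
      · exact ih ν hν h
      · rw [h1.2.2 ν h, h2.2.2 ν h]
  funext ρ
  by_cases h : InCone p η A ρ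
  · exact key ρ h
  · rw [h1.2.2 ρ h, h2.2.2 ρ h]

/-- Existence of the canonical `μ`-function over a thin front, with values in `[0,1]`. -/
lemma exists_canon (p : Cond T) (hG : T.Good) {η : List ℕ} (hη : η ∈ p.tree)
    {A : Set (List ℕ)} (hA : IsFrontAt p η A) (hthin : Thin A) (f : List ℕ → ℝ)
    (hf : ∀ a ∈ A, f a ∈ Set.Icc (0:ℝ) 1) :
    ∃ m : List ℕ → ℝ, IsMuAt p η A f m ∧ ∀ ρ, m ρ ∈ Set.Icc (0:ℝ) 1 := by
  classical
  set r : List ℕ → List ℕ → Prop :=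
    fun τ σ => InCone p η A σ ∧ σ ∉ A ∧ τ ∈ (p.c σ).pos ∧ InCone p η A τ with hr
  have wf : WellFounded r := by
    constructor
    intro σ
    by_cases hσ : InCone p η A σ
    · refine bar_induction p hη hA hthin (Acc r) ?_ ?_ σ hσ
      · intro ρ hρ
        exact Acc.intro ρ (fun τ hτ => absurd hρ hτ.2.1)
      · intro ρ hρ hρA ih
        exact Acc.intro ρ (fun τ hτ => ih τ hτ.2.2.1 hτ.2.2.2)
    · exact Acc.intro σ (fun τ hτ => absurd hτ.1 hσ)
  set m : List ℕ → ℝ := WellFounded.fix wf (fun σ ih =>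
    if hσ : InCone p η A σ then
      (if σ ∈ A then f σ
       else T.F (p.c σ) (fun τ => if h : r τ σ then ih τ h else 0))
    else 0) with hm
  have hmeq : ∀ σ, m σ =
      if InCone p η A σ then
        (if σ ∈ A then f σ
         else T.F (p.c σ) (fun τ => if h : r τ σ then m τ else 0))
      else 0 := fun σ => WellFounded.fix_eq wf _ σ
  have hmu : IsMuAt p η A f m := by
    refine ⟨?_, ?_, ?_⟩
    · intro ρ hρ
      have hc : InCone p η A ρ := ⟨(hA.1 ρ hρ).1, (hA.1 ρ hρ).2, ρ, hρ, List.prefix_rfl⟩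
      rw [hmeq ρ, if_pos hc, if_pos hρ]
    · intro ρ hρ hρA
      rw [hmeq ρ, if_pos hρ, if_neg hρA]
      refine hG.F_congr _ _ _ ?_
      intro ν hν
      by_cases h : InCone p η A ν
      · rw [dif_pos ⟨hρ, hρA, hν, h⟩]
      · rw [dif_neg (fun h' : r ν ρ => h h'.2.2.2)]
        rw [hmeq ν, if_neg h]
    · intro ρ hρ; rw [hmeq ρ, if_neg hρ]
  refine ⟨m, hmu, ?_⟩
  intro ρ
  by_cases h : InCone p η A ρ
  · refine bar_induction p hη hA hthin (fun σ => m σ ∈ Set.Icc (0:ℝ) 1) ?_ ?_ ρ h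
    · intro σ hσ; rw [hmu.1 σ hσ]; exact hf σ hσ
    · intro σ hσ hσA ih
      rw [hmu.2.1 σ hσ hσA]
      refine hG.F_mem _ _ ?_
      intro ν hν
      by_cases h' : InCone p η A ν
      · exact ih ν hν h'
      · rw [hmu.2.2 ν h']; exact ⟨le_rfl, zero_le_one⟩
  · rw [hmu.2.2 ρ h]; exact ⟨le_rfl, zero_le_one⟩

/-- The set whose infimum defines `muAt`. -/
def SetAt (p : Cond T) (η : List ℕ) : Set ℝ :=
  {x : ℝ | ∃ (A : Set (List ℕ)) (m : List ℕ → ℝ),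
    IsFrontAt p η A ∧ IsMuAt p η A (fun _ => 1) m ∧ x = m η}

lemma muAt_eq_sInf (p : Cond T) (η : List ℕ) : muAt p η = sInf (SetAt p η) := rfl

lemma one_mem_setAt (p : Cond T) {η : List ℕ} (hη : η ∈ p.tree) : 1 ∈ SetAt p η := by
  classical
  have hc : InCone p η {η} η := ⟨hη, List.prefix_rfl, η, rfl, List.prefix_rfl⟩
  refine ⟨{η}, (fun ρ => if ρ = η then 1 else 0), ⟨?_, ?_⟩, ⟨?_, ?_, ?_⟩, by simp⟩
  · rintro ρ rfl; exact ⟨hη, List.prefix_rfl⟩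
  · intro x hx
    exact ⟨η.length, by rw [hx.1]; rfl⟩
  · rintro ρ rfl; simp
  · rintro ρ ⟨-, h1, ν, rfl, h2⟩ hρ
    exact absurd (prefix_antisymm h1 h2).symm (by simpa using hρ)
  · intro ρ hρ
    have : ρ ≠ η := by rintro rfl; exact hρ hc
    simp [this]

lemma elem_to_thin (p : Cond T) (hG : T.Good) {η : List ℕ} (hη : η ∈ p.tree) {x : ℝ}
    (hx : x ∈ SetAt p η) :
    ∃ (A : Set (List ℕ)) (m : List ℕ → ℝ), IsFrontAt p η A ∧ Thin A ∧
      IsMuAt p η A (fun _ => 1) m ∧ (∀ ρ, m ρ ∈ Set.Icc (0:ℝ) 1) ∧ x = m η := by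
  classical
  obtain ⟨A, m, hA, hm, hxm⟩ := hx
  have hA' := thinned_front p hA
  have hm' := thinned_isMuAt hG p hη hA hm
  obtain ⟨mc, hmc, hmcIcc⟩ := exists_canon p hG hη hA' (thinned_thin A) _
    (fun a _ => ⟨zero_le_one, le_rfl⟩)
  have huniq := muAt_unique p hG hη hA' (thinned_thin A) hm' hmc
  have hcη : InCone p η (thinned A) η := inCone_self p hη hA'
  refine ⟨thinned A, mc, hA', thinned_thin A, hmc, hmcIcc, ?_⟩
  have : mc η = m η := by
    rw [← congrFun huniq η]; simp only [if_pos hcη]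
  rw [hxm, ← this]

lemma setAt_subset_Icc (p : Cond T) (hG : T.Good) {η : List ℕ} (hη : η ∈ p.tree) :
    SetAt p η ⊆ Set.Icc (0:ℝ) 1 := by
  intro x hx
  obtain ⟨A, m, -, -, -, hIcc, hxm⟩ := elem_to_thin p hG hη hx
  rw [hxm]; exact hIcc η

lemma muAt_le (p : Cond T) (hG : T.Good) {η : List ℕ} (hη : η ∈ p.tree) {x : ℝ}
    (hx : x ∈ SetAt p η) : muAt p η ≤ x :=
  csInf_le ⟨0, fun y hy => (setAt_subset_Icc p hG hη hy).1⟩ hx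

lemma exists_thin_lt (p : Cond T) (hG : T.Good) {η : List ℕ} (hη : η ∈ p.tree) {y : ℝ}
    (h : muAt p η < y) :
    ∃ (A : Set (List ℕ)) (m : List ℕ → ℝ), IsFrontAt p η A ∧ Thin A ∧
      IsMuAt p η A (fun _ => 1) m ∧ (∀ ρ, m ρ ∈ Set.Icc (0:ℝ) 1) ∧ m η < y := by
  obtain ⟨x, hx, hxy⟩ := exists_lt_of_csInf_lt ⟨1, one_mem_setAt p hη⟩ h
  obtain ⟨A, m, h1, h2, h3, h4, h5⟩ := elem_to_thin p hG hη hx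
  exact ⟨A, m, h1, h2, h3, h4, h5 ▸ hxy⟩
/-- Combining a thin front with chosen thin fronts above each of its nodes. -/
lemma combine_step (p : Cond T) (hG : T.Good) (hN : T.Nice) {c : ℝ}
    (hc0 : 0 ≤ c) (hc1 : c < 1)
    {C : Set (List ℕ)} (hC : IsFrontAt p p.root C) (hCthin : Thin C)
    {mC : List ℕ → ℝ} (hmC : IsMuAt p p.root C (fun _ => 1) mC)
    (hmCIcc : ∀ ρ, mC ρ ∈ Set.Icc (0:ℝ) 1)
    (𝒜 : List ℕ → Set (List ℕ)) (w : List ℕ → List ℕ → ℝ)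
    (hw : ∀ ρ, ρ ∈ C → IsFrontAt p ρ (𝒜 ρ) ∧ Thin (𝒜 ρ) ∧
      IsMuAt p ρ (𝒜 ρ) (fun _ => 1) (w ρ) ∧ (∀ σ, w ρ σ ∈ Set.Icc (0:ℝ) 1) ∧ w ρ ρ < c) :
    ∃ (C' : Set (List ℕ)) (m' : List ℕ → ℝ), IsFrontAt p p.root C' ∧ Thin C' ∧
      IsMuAt p p.root C' (fun _ => 1) m' ∧ (∀ ρ, m' ρ ∈ Set.Icc (0:ℝ) 1) ∧
      m' p.root ≤ c * mC p.root := by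
  classical
  have hCtree : ∀ ρ ∈ C, ρ ∈ p.tree := fun ρ h => (hC.1 ρ h).1
  -- each ρ ∈ C lies strictly below its front 𝒜 ρ
  have hproper : ∀ ρ ∈ C, ρ ∉ 𝒜 ρ := by
    intro ρ hρ h
    have h1 := (hw ρ hρ).2.2.1.1 ρ h
    have h5 := (hw ρ hρ).2.2.2.2
    simp only at h1
    linarith [(hw ρ hρ).2.2.2.1 ρ]
  have hext : ∀ ρ ∈ C, ∀ a ∈ 𝒜 ρ, ρ <+: a ∧ ρ ≠ a := by
    intro ρ hρ a ha
    refine ⟨((hw ρ hρ).1.1 a ha).2, ?_⟩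
    rintro rfl; exact hproper ρ hρ ha
  set C' : Set (List ℕ) := {b | ∃ ρ ∈ C, b ∈ 𝒜 ρ} with hC'def
  -- membership analysis: which ρ an element of C' belongs to is unique
  have hsame : ∀ ρ ∈ C, ∀ ρ' ∈ C, ∀ {a b : List ℕ}, a ∈ 𝒜 ρ → b ∈ 𝒜 ρ' → a <+: b → ρ = ρ' := by
    intro ρ hρ ρ' hρ' a b ha hb hab
    have h1 : ρ <+: b := (hext ρ hρ a ha).1.trans hab
    have h2 : ρ' <+: b := (hext ρ' hρ' b hb).1
    rcases List.prefix_or_prefix_of_prefix h1 h2 with h | h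
    · exact hCthin ρ hρ ρ' hρ' h
    · exact (hCthin ρ' hρ' ρ hρ h).symm
  have hC'thin : Thin C' := by
    rintro a ⟨ρ, hρ, ha⟩ b ⟨ρ', hρ', hb⟩ hab
    obtain rfl := hsame ρ hρ ρ' hρ' ha hb hab
    exact (hw ρ hρ).2.1 a ha b hb hab
  have hC'front : IsFrontAt p p.root C' := by
    constructor
    · rintro a ⟨ρ, hρ, ha⟩
      refine ⟨((hw ρ hρ).1.1 a ha).1, ?_⟩
      exact (p.root_le ρ (hCtree ρ hρ)).trans ((hw ρ hρ).1.1 a ha).2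
    · intro x hx
      obtain ⟨n, hn⟩ := hC.2 x hx
      set ρ := initSeg x n with hρdef
      have hρlen : ρ.length = n := initSeg_length x n
      have hrootlen : p.root.length ≤ n := by
        have := (hC.1 ρ hn).2.length_le; omega
      have hxρ : IsBranchAt p ρ x := by
        constructor
        · rw [hρlen]
        · intro m hm; exact hx.2 m (by omega)
      obtain ⟨k, hk⟩ := (hw ρ hn).1.2 x hxρ
      exact ⟨k, ρ, hn, hk⟩
  -- the canonical μ-function of the combined front
  obtain ⟨m', hm', hm'Icc⟩ := exists_canon p hG p.root_mem hC'front hC'thin _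
    (fun a _ => ⟨zero_le_one, le_rfl⟩)
  -- cone fact: above ρ ∈ C, the cone of C' is the cone of 𝒜 ρ
  have fact3 : ∀ ρ ∈ C, ∀ σ, ρ <+: σ →
      (InCone p p.root C' σ ↔ InCone p ρ (𝒜 ρ) σ) := by
    intro ρ hρ σ hρσ
    constructor
    · rintro ⟨h1, h2, b, ⟨ρ', hρ', hb⟩, hσb⟩
      have hcmp : ρ = ρ' := by
        have hρb : ρ <+: b := hρσ.trans hσb
        have hρ'b : ρ' <+: b := (hext ρ' hρ' b hb).1
        rcases List.prefix_or_prefix_of_prefix hρb hρ'b with h | h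
        · exact hCthin ρ hρ ρ' hρ' h
        · exact (hCthin ρ' hρ' ρ hρ h).symm
      exact ⟨h1, hρσ, b, hcmp ▸ hb, hσb⟩
    · rintro ⟨h1, h2, b, hb, hσb⟩
      exact ⟨h1, (p.root_le ρ (hCtree ρ hρ)).trans hρσ, b, ⟨ρ, hρ, hb⟩, hσb⟩
  -- restriction of m' above ρ ∈ C equals w ρ, so m' ρ < c
  have hbase : ∀ ρ ∈ C, m' ρ < c := by
    intro ρ hρ
    obtain ⟨hAf, hAt, hAmu, hAIcc, hAlt⟩ := hw ρ hρ
    have hres : IsMuAt p ρ (𝒜 ρ) (fun _ => 1)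
        (fun σ => if InCone p ρ (𝒜 ρ) σ then m' σ else 0) := by
      refine ⟨?_, ?_, ?_⟩
      · intro a ha
        have hc' : InCone p ρ (𝒜 ρ) a := ⟨(hAf.1 a ha).1, (hAf.1 a ha).2, a, ha, List.prefix_rfl⟩
        simp only [if_pos hc']
        exact hm'.1 a ⟨ρ, hρ, ha⟩
      · intro σ hσ hσA
        have hσC' : InCone p p.root C' σ := (fact3 ρ hρ σ hσ.2.1).2 hσ
        have hσnC' : σ ∉ C' := by
          rintro ⟨ρ'', hρ'', hσ𝒜⟩
          have : ρ'' = ρ := by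
            have h1 : ρ'' <+: σ := (hext ρ'' hρ'' σ hσ𝒜).1
            have h2 : ρ <+: σ := hσ.2.1
            rcases List.prefix_or_prefix_of_prefix h1 h2 with h | h
            · obtain ⟨-, -, b, hb, hσb⟩ := hσ
              have hρ''b : ρ'' <+: b := h1.trans hσb
              rcases List.prefix_or_prefix_of_prefix hρ''b ((hext ρ hρ b hb).1) with h' | h'
              · exact hCthin ρ'' hρ'' ρ hρ h'
              · exact (hCthin ρ hρ ρ'' hρ'' h').symm
            · obtain ⟨-, -, b, hb, hσb⟩ := hσ
              have hρ''b : ρ'' <+: b := h1.trans hσb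
              rcases List.prefix_or_prefix_of_prefix hρ''b ((hext ρ hρ b hb).1) with h' | h'
              · exact hCthin ρ'' hρ'' ρ hρ h'
              · exact (hCthin ρ hρ ρ'' hρ'' h').symm
          exact hσA (this ▸ hσ𝒜)
        simp only [if_pos hσ]
        rw [hm'.2.1 σ hσC' hσnC']
        refine hG.F_congr _ _ _ ?_
        intro τ hτ
        have hρτ : ρ <+: τ := hσ.2.1.trans (succ_mem p hσ.1 hτ).2.1
        by_cases h : InCone p ρ (𝒜 ρ) τ
        · simp only [if_pos h]
        · simp only [if_neg h]
          exact hm'.2.2 τ (fun h' => h ((fact3 ρ hρ τ hρτ).1 h'))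
      · intro σ hσ; simp only [if_neg hσ]
    have huniq := muAt_unique p hG (hCtree ρ hρ) hAf hAt hres hAmu
    have hcρ : InCone p ρ (𝒜 ρ) ρ := inCone_self p (hCtree ρ hρ) hAf
    have : m' ρ = w ρ ρ := by
      have := congrFun huniq ρ
      simpa only [if_pos hcρ] using this
    rw [this]; exact hAlt
  -- comparison below C
  have hcomp : ∀ σ, InCone p p.root C σ → m' σ ≤ c * mC σ := by
    refine bar_induction p p.root_mem hC hCthin _ ?_ ?_
    · intro σ hσ
      rw [hmC.1 σ hσ]
      simpa using (hbase σ hσ).le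
    · intro σ hσ hσC ih
      -- σ is in the cone of C' but not in C'
      have hσtree : σ ∈ p.tree := hσ.1
      obtain ⟨-, hσroot, ρ, hρ, hσρ⟩ := hσ
      have hσC'cone : InCone p p.root C' σ := by
        obtain ⟨a, ha, hρa⟩ := front_nonempty p (hCtree ρ hρ) (hw ρ hρ).1
        exact ⟨hσtree, hσroot, a, ⟨ρ, hρ, ha⟩, hσρ.trans hρa⟩
      have hσnC' : σ ∉ C' := by
        rintro ⟨ρ'', hρ'', hσ𝒜⟩
        have h1 : ρ'' <+: σ := (hext ρ'' hρ'' σ hσ𝒜).1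
        have h2 : ρ'' <+: ρ := h1.trans hσρ
        have : ρ'' = ρ := hCthin ρ'' hρ'' ρ hρ h2
        have : σ = ρ := prefix_antisymm hσρ (this ▸ h1)
        exact hσC (this ▸ hρ)
      rw [hm'.2.1 σ hσC'cone hσnC', hmC.2.1 σ ⟨hσtree, hσroot, ρ, hρ, hσρ⟩ hσC]
      have hstep1 : T.F (p.c σ) m' ≤ T.F (p.c σ) (fun τ => c * mC τ) := by
        refine hN.mono _ (p.c_mem σ hσtree) _ _ (fun τ _ => hm'Icc τ) ?_ ?_
        · intro τ _
          exact ⟨mul_nonneg hc0 (hmCIcc τ).1,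
            mul_le_one₀ hc1.le (hmCIcc τ).1 (hmCIcc τ).2⟩
        · intro τ hτ
          by_cases h : InCone p p.root C τ
          · exact ih τ hτ h
          · -- τ is outside both cones
            have hτnC' : ¬ InCone p p.root C' τ := by
              rintro ⟨hτtree, hτroot, b, ⟨ρ'', hρ'', hb⟩, hτb⟩
              have hρ''b : ρ'' <+: b := (hext ρ'' hρ'' b hb).1
              rcases List.prefix_or_prefix_of_prefix hτb hρ''b with h' | h'
              · exact h ⟨hτtree, hτroot, ρ'', hρ'', h'⟩
              · have hlenτ : τ.length = σ.length + 1 := (succ_mem p hσtree hτ).2.2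
                have hστ : σ <+: τ := (succ_mem p hσtree hτ).2.1
                by_cases he : ρ'' = τ
                · exact h ⟨hτtree, hτroot, ρ'', hρ'', he ▸ List.prefix_rfl⟩
                · have hρ''len : ρ''.length ≤ σ.length := by
                    have h1 := h'.length_le
                    rcases Nat.lt_or_ge ρ''.length τ.length with h'' | h''
                    · omega
                    · exact absurd (h'.eq_of_length (le_antisymm h1 h'')) he
                  have hρ''σ : ρ'' <+: σ := List.prefix_of_prefix_length_le h' hστ hρ''len
                  have : ρ'' = ρ := hCthin ρ'' hρ'' ρ hρ (hρ''σ.trans hσρ)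
                  have : σ = ρ := prefix_antisymm hσρ (this ▸ hρ''σ)
                  exact hσC (this ▸ hρ)
            rw [hm'.2.2 τ hτnC', hmC.2.2 τ h, mul_zero]
      have hstep2 : T.F (p.c σ) (fun τ => c * mC τ) = c * T.F (p.c σ) mC :=
        hN.scale _ (p.c_mem σ hσtree) c ⟨hc0, hc1.le⟩ mC (fun τ _ => hmCIcc τ)
      calc T.F (p.c σ) m' ≤ T.F (p.c σ) (fun τ => c * mC τ) := hstep1
      _ = c * T.F (p.c σ) mC := hstep2
  refine ⟨C', m', hC'front, hC'thin, hm', hm'Icc, ?_⟩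
  exact hcomp p.root (inCone_self p p.root_mem hC)
/-- Lemma `getstr`: if `p ∈ Q^mt_∅(K,Σ,F)` and `0 < ε < 1`, then
some node `η` of the tree of `p` has `μ^F_p(η) ≥ 1 − ε`. -/
theorem exists_node_with_large_measure
    (T : MTriple H) (hG : T.Good) (hN : T.Nice)
    (p : Cond T) (hp : 0 < muF p)
    (ε : ℝ) (hε0 : 0 < ε) (hε1 : ε < 1) :
    ∃ η ∈ p.tree, 1 - ε ≤ muAt p η := by
  by_contra hcon
  push_neg at hcon
  set c : ℝ := 1 - ε with hcdef
  have hc0 : 0 ≤ c := by simp only [hcdef]; linarith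
  have hc1 : c < 1 := by simp only [hcdef]; linarith
  have key : ∀ k : ℕ, ∃ (C : Set (List ℕ)) (m : List ℕ → ℝ),
      IsFrontAt p p.root C ∧ Thin C ∧ IsMuAt p p.root C (fun _ => 1) m ∧
      (∀ ρ, m ρ ∈ Set.Icc (0:ℝ) 1) ∧ m p.root ≤ c ^ k := by
    intro k
    induction k with
    | zero =>
      have hlt : muAt p p.root < 2 :=
        lt_of_le_of_lt (muAt_le p hG p.root_mem (one_mem_setAt p p.root_mem)) one_lt_two
      obtain ⟨C, m, h1, h2, h3, h4, -⟩ := exists_thin_lt p hG p.root_mem hlt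
      exact ⟨C, m, h1, h2, h3, h4, by simpa using (h4 p.root).2⟩
    | succ k ih =>
      obtain ⟨C, m, hC, hCt, hm, hmI, hml⟩ := ih
      have hwit : ∀ ρ : List ℕ, ∃ (A : Set (List ℕ)) (v : List ℕ → ℝ), ρ ∈ C →
          IsFrontAt p ρ A ∧ Thin A ∧ IsMuAt p ρ A (fun _ => 1) v ∧
          (∀ σ, v σ ∈ Set.Icc (0:ℝ) 1) ∧ v ρ < c := by
        intro ρ
        by_cases h : ρ ∈ C
        · have hρt : ρ ∈ p.tree := (hC.1 ρ h).1
          obtain ⟨A, v, h1, h2, h3, h4, h5⟩ := exists_thin_lt p hG hρt (hcon ρ hρt)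
          exact ⟨A, v, fun _ => ⟨h1, h2, h3, h4, h5⟩⟩
        · exact ⟨∅, 0, fun h' => absurd h' h⟩
      choose 𝒜 w hw using hwit
      obtain ⟨C', m', h1, h2, h3, h4, h5⟩ :=
        combine_step p hG hN hc0 hc1 hC hCt hm hmI 𝒜 w hw
      refine ⟨C', m', h1, h2, h3, h4, ?_⟩
      calc m' p.root ≤ c * m p.root := h5
      _ ≤ c * c ^ k := mul_le_mul_of_nonneg_left hml hc0
      _ = c ^ (k + 1) := (pow_succ' c k).symm
  obtain ⟨k, hk⟩ := exists_pow_lt_of_lt_one hp hc1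
  obtain ⟨C, m, hC, -, hm, -, hml⟩ := key k
  have hle : muF p ≤ m p.root := muAt_le p hG p.root_mem ⟨C, m, hC, hm, rfl⟩
  have : muF p < muF p := lt_of_le_of_lt (hle.trans hml) hk
  exact lt_irrefl _ this

end MeasuredTrees
end
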